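/- arXiv:2303.17445 — 5 statements merged into one kernel-verified Lean document; each statement's English description precedes it below -/
import Mathlib

section
/- Let h : ℝ² → ℝ be a C² function on a domain Ω satisfying h_xx·h_yy − h_xy² ≤ 0 everywhere. Then the graph z = h(x,y) satisfies the convex hull property: for every compact subdomain K ⊆ Ω, the graph of h over K is contained in the convex hull in ℝ³ of the graph of h restricted to ∂K. -/
set_option maxHeartbeats 1000000

noncomputable def dX (f : ℝ × ℝ → ℝ) (p : ℝ × ℝ) : ℝ := fderiv ℝ f p (1, 0)
noncomputable def dY (f : ℝ × ℝ → ℝ) (p : ℝ × ℝ) : ℝ := fderiv ℝ f p (0, 1)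

open Set Finset


lemma clm_expand {F : Type*} [NormedAddCommGroup F] [NormedSpace ℝ F]
    (L : (ℝ × ℝ) →L[ℝ] F) (w : ℝ × ℝ) : L w = w.1 • L (1,0) + w.2 • L (0,1) := by
  have h : w = w.1 • ((1:ℝ),(0:ℝ)) + w.2 • ((0:ℝ),(1:ℝ)) := by simp [Prod.ext_iff]
  calc L w = L (w.1 • ((1:ℝ),(0:ℝ)) + w.2 • ((0:ℝ),(1:ℝ))) := by rw [← h]
  _ = w.1 • L (1,0) + w.2 • L (0,1) := by rw [map_add, map_smul, map_smul]

lemma clm_expand3 (L : (ℝ × ℝ × ℝ) →L[ℝ] ℝ) (x y z : ℝ) :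
    L (x, y, z) = x * L (1,0,0) + y * L (0,1,0) + z * L (0,0,1) := by
  have h : (x,y,z) = x • ((1:ℝ),(0:ℝ),(0:ℝ)) + y • ((0:ℝ),(1:ℝ),(0:ℝ)) + z • ((0:ℝ),(0:ℝ),(1:ℝ)) := by
    simp [Prod.ext_iff]
  calc L (x,y,z) = L (x • ((1:ℝ),(0:ℝ),(0:ℝ)) + y • ((0:ℝ),(1:ℝ),(0:ℝ)) + z • ((0:ℝ),(0:ℝ),(1:ℝ))) := by rw [← h]
  _ = x * L (1,0,0) + y * L (0,1,0) + z * L (0,0,1) := by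
      rw [map_add, map_add, map_smul, map_smul, map_smul]; simp [smul_eq_mul]


lemma isCompact_convexHull3 {s : Set (ℝ × ℝ × ℝ)} (hs : IsCompact s) :
    IsCompact (convexHull ℝ s) := by
  rcases s.eq_empty_or_nonempty with rfl | ⟨x₀, hx₀⟩
  · simpa using isCompact_empty
  classical
  set F : ((Fin 4 → ℝ) × (Fin 4 → ℝ × ℝ × ℝ)) → ℝ × ℝ × ℝ :=
    fun wz => ∑ i, wz.1 i • wz.2 i with hF
  have hFc : Continuous F := by
    apply continuous_finset_sum
    intro i _
    exact ((continuous_apply i).comp continuous_fst).smul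
      ((continuous_apply i).comp continuous_snd)
  set T : Set ((Fin 4 → ℝ) × (Fin 4 → ℝ × ℝ × ℝ)) :=
    (stdSimplex ℝ (Fin 4)) ×ˢ (Set.univ.pi fun _ => s) with hT
  have hTc : IsCompact T := (isCompact_stdSimplex _ _).prod (isCompact_univ_pi fun _ => hs)
  have key : convexHull ℝ s = F '' T := by
    apply Set.Subset.antisymm
    · intro x hx
      obtain ⟨ι, hι, z, w, hzs, hai, hwpos, hwsum, hx'⟩ :=
        eq_pos_convex_span_of_mem_convexHull hx
      have hcard : Fintype.card ι ≤ 4 := by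
        have h1 := hai.card_le_finrank_succ
        have h2 : Module.finrank ℝ (vectorSpan ℝ (Set.range z)) ≤ 3 := by
          have := Submodule.finrank_le (vectorSpan ℝ (Set.range z))
          simpa [Module.finrank_prod] using this
        omega
      obtain ⟨e⟩ : Nonempty (ι ↪ Fin 4) := by
        rw [Function.Embedding.nonempty_iff_card_le]
        simpa using hcard
      set w' : Fin 4 → ℝ := Function.extend e w 0 with hw'
      set z' : Fin 4 → ℝ × ℝ × ℝ := Function.extend e z (fun _ => x₀) with hz'
      have hwe : ∀ i, w' (e i) = w i := fun i => e.injective.extend_apply _ _ _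
      have hze : ∀ i, z' (e i) = z i := fun i => e.injective.extend_apply _ _ _
      have hrange : ∀ j : Fin 4, j ∉ Finset.univ.map e → w' j = 0 := by
        intro j hj
        have hne : ¬ ∃ i, e i = j := by
          rintro ⟨i, hi⟩; exact hj (Finset.mem_map.2 ⟨i, Finset.mem_univ _, hi⟩)
        simp [hw', Function.extend_apply' _ _ _ hne]
      have hsum_eq : ∀ {M : Type} [AddCommMonoid M] (f : Fin 4 → M),
          (∀ j, j ∉ Finset.univ.map e → f j = 0) →
          ∑ j, f j = ∑ i, f (e i) := by
        intro M _ f hf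
        rw [← Finset.sum_map Finset.univ e f]
        exact (Finset.sum_subset (Finset.subset_univ _)
          (fun j _ hj => hf j hj)).symm
      refine ⟨(w', z'), ⟨⟨?_, ?_⟩, ?_⟩, ?_⟩
      · intro j
        rcases em (∃ i, e i = j) with ⟨i, rfl⟩ | hj
        · show 0 ≤ w' (e i)
          rw [hwe]; exact (hwpos i).le
        · simp [hw', Function.extend_apply' _ _ _ hj]
      · rw [hsum_eq w' hrange]
        simpa [hwe] using hwsum
      · intro j _
        rcases em (∃ i, e i = j) with ⟨i, rfl⟩ | hj
        · show z' (e i) ∈ s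
          rw [hze]; exact hzs ⟨i, rfl⟩
        · simpa [hz', Function.extend_apply' _ _ _ hj] using hx₀
      · show ∑ j, w' j • z' j = x
        rw [hsum_eq (fun j => w' j • z' j) (fun j hj => by show w' j • z' j = 0; rw [hrange j hj, zero_smul])]
        simpa [hwe, hze] using hx'
    · rintro x ⟨⟨w, z⟩, ⟨hwT, hzT⟩, rfl⟩
      exact Convex.sum_mem (convex_convexHull ℝ s) (fun i _ => hwT.1 i) hwT.2
        (fun i _ => subset_convexHull ℝ s (hzT i (Set.mem_univ i)))
  rw [key]
  exact hTc.image hFc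

section core
variable {Ω : Set (ℝ × ℝ)} {h : ℝ × ℝ → ℝ}

lemma line_hasDerivAt (p v : ℝ × ℝ) (s : ℝ) :
    HasDerivAt (fun s : ℝ => p + s • v) v s := by
  simpa using ((hasDerivAt_id s).smul_const v).const_add p

lemma diffAt (hΩ : IsOpen Ω) (hC2 : ContDiffOn ℝ 2 h Ω) {q : ℝ × ℝ} (hq : q ∈ Ω) :
    DifferentiableAt ℝ h q :=
  (hC2.differentiableOn (by norm_num)).differentiableAt (hΩ.mem_nhds hq)

lemma fderiv_diffAt (hΩ : IsOpen Ω) (hC2 : ContDiffOn ℝ 2 h Ω) {q : ℝ × ℝ} (hq : q ∈ Ω) :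
    DifferentiableAt ℝ (fderiv ℝ h) q := by
  have h1 : ContDiffOn ℝ 1 (fderiv ℝ h) Ω := hC2.fderiv_of_isOpen hΩ (by norm_num)
  exact (h1.differentiableOn (by norm_num)).differentiableAt (hΩ.mem_nhds hq)

/-- derivative of s ↦ h(p + s v) -/
lemma comp_line_hasDerivAt (hΩ : IsOpen Ω) (hC2 : ContDiffOn ℝ 2 h Ω)
    (p v : ℝ × ℝ) {s : ℝ} (hq : p + s • v ∈ Ω) :
    HasDerivAt (fun s : ℝ => h (p + s • v))
      (v.1 * dX h (p + s • v) + v.2 * dY h (p + s • v)) s := by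
  have h1 := ((diffAt hΩ hC2 hq).hasFDerivAt).comp_hasDerivAt s (line_hasDerivAt p v s)
  have h2 : fderiv ℝ h (p + s • v) v
      = v.1 * dX h (p + s • v) + v.2 * dY h (p + s • v) := by
    rw [clm_expand]; simp [dX, dY, smul_eq_mul]
  rwa [h2] at h1

/-- derivative of s ↦ dX h (p + s v) at any point where the curve is in Ω -/
lemma dX_comp_line_hasDerivAt (hΩ : IsOpen Ω) (hC2 : ContDiffOn ℝ 2 h Ω)
    (p v : ℝ × ℝ) {s : ℝ} (hq : p + s • v ∈ Ω) (w : ℝ × ℝ) :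
    HasDerivAt (fun s : ℝ => fderiv ℝ h (p + s • v) w)
      (fderiv ℝ (fderiv ℝ h) (p + s • v) v w) s := by
  have h1 : HasFDerivAt (fderiv ℝ h) (fderiv ℝ (fderiv ℝ h) (p + s • v)) (p + s • v) :=
    (fderiv_diffAt hΩ hC2 hq).hasFDerivAt
  have h2 := ((ContinuousLinearMap.apply ℝ ℝ w).hasFDerivAt.comp (p + s • v) h1).comp_hasDerivAt
    s (line_hasDerivAt p v s)
  exact h2

lemma snd_fderiv_eq (hΩ : IsOpen Ω) (hC2 : ContDiffOn ℝ 2 h Ω) {q : ℝ × ℝ} (hq : q ∈ Ω) :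
    fderiv ℝ (fderiv ℝ h) q (1,0) (1,0) = dX (dX h) q
    ∧ fderiv ℝ (fderiv ℝ h) q (1,0) (0,1) = dX (dY h) q
    ∧ fderiv ℝ (fderiv ℝ h) q (0,1) (0,1) = dY (dY h) q
    ∧ fderiv ℝ (fderiv ℝ h) q (0,1) (1,0) = dX (dY h) q := by
  have key : ∀ w : ℝ × ℝ, ∀ u : ℝ × ℝ,
      fderiv ℝ (fun x => fderiv ℝ h x w) q u = fderiv ℝ (fderiv ℝ h) q u w := by
    intro w u
    have h1 : HasFDerivAt (fderiv ℝ h) (fderiv ℝ (fderiv ℝ h) q) q :=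
      (fderiv_diffAt hΩ hC2 hq).hasFDerivAt
    have h2 := (ContinuousLinearMap.apply ℝ ℝ w).hasFDerivAt.comp q h1
    rw [show (fun x => fderiv ℝ h x w) = (⇑((ContinuousLinearMap.apply ℝ ℝ) w) ∘ fderiv ℝ h)
      from rfl, h2.fderiv]
    rfl
  have hsymm : ∀ u w, fderiv ℝ (fderiv ℝ h) q u w = fderiv ℝ (fderiv ℝ h) q w u :=
    (hC2.contDiffAt (hΩ.mem_nhds hq)).isSymmSndFDerivAt (by norm_num)
  refine ⟨?_, ?_, ?_, ?_⟩
  · rw [show dX (dX h) q = fderiv ℝ (fun x => fderiv ℝ h x (1,0)) q (1,0) from rfl, key]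
  · rw [show dX (dY h) q = fderiv ℝ (fun x => fderiv ℝ h x (0,1)) q (1,0) from rfl, key,
      hsymm]
  · rw [show dY (dY h) q = fderiv ℝ (fun x => fderiv ℝ h x (0,1)) q (0,1) from rfl, key]
  · rw [show dX (dY h) q = fderiv ℝ (fun x => fderiv ℝ h x (0,1)) q (1,0) from rfl, key, hsymm]

end core

section core2
variable {Ω : Set (ℝ × ℝ)} {h : ℝ × ℝ → ℝ}

lemma no_local_max (hΩ : IsOpen Ω) (hC2 : ContDiffOn ℝ 2 h Ω)
    (hsaddle : ∀ p ∈ Ω, dX (dX h) p * dY (dY h) p - (dX (dY h) p) ^ 2 ≤ 0)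
    (a b t ε : ℝ) (hε : 0 < ε) {p : ℝ × ℝ} (hp : p ∈ Ω)
    (hmax : IsLocalMax (fun q : ℝ × ℝ => a * q.1 + b * q.2 + t * h q
      + ε * (q.1 ^ 2 + q.2 ^ 2)) p) : False := by
  set g : ℝ × ℝ → ℝ := fun q => a * q.1 + b * q.2 + t * h q + ε * (q.1 ^ 2 + q.2 ^ 2) with hg
  set A := t * dX (dX h) p with hA
  set B := t * dX (dY h) p with hB
  set C := t * dY (dY h) p with hC
  have hdet : A * C - B ^ 2 ≤ 0 := by
    have h0 := hsaddle p hp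
    rw [hA, hB, hC]
    nlinarith [mul_nonneg (sq_nonneg t)
      (by linarith : (0:ℝ) ≤ dX (dY h) p ^ 2 - dX (dX h) p * dY (dY h) p)]
  -- choose a direction with nonnegative second derivative
  obtain ⟨v, hQ, hv⟩ : ∃ v : ℝ × ℝ,
      0 ≤ A * v.1 ^ 2 + 2 * B * v.1 * v.2 + C * v.2 ^ 2 ∧ 0 < v.1 ^ 2 + v.2 ^ 2 := by
    rcases le_or_gt 0 A with hA0 | hA0
    · exact ⟨(1, 0), by simpa using hA0, by norm_num⟩
    rcases le_or_gt 0 C with hC0 | hC0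
    · exact ⟨(0, 1), by simpa using hC0, by norm_num⟩
    refine ⟨(B, -A), ?_, ?_⟩
    · show 0 ≤ A * B ^ 2 + 2 * B * B * (-A) + C * (-A) ^ 2
      nlinarith [mul_nonneg (neg_pos.mpr hA0).le (by linarith : (0:ℝ) ≤ B ^ 2 - A * C)]
    · show 0 < B ^ 2 + (-A) ^ 2
      nlinarith [mul_pos (neg_pos.mpr hA0) (neg_pos.mpr hA0), sq_nonneg B]
  -- the function along the line and its derivative
  set φ : ℝ → ℝ := fun s => g (p + s • v) with hφ
  set ψ : ℝ → ℝ := fun s => a * v.1 + b * v.2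
      + t * (v.1 * dX h (p + s • v) + v.2 * dY h (p + s • v))
      + ε * (2 * (p.1 + s * v.1) * v.1 + 2 * (p.2 + s * v.2) * v.2) with hψ
  have hl1 : ∀ s : ℝ, HasDerivAt (fun s : ℝ => p.1 + s * v.1) v.1 s := fun s => by
    simpa using ((hasDerivAt_id s).mul_const v.1).const_add p.1
  have hl2 : ∀ s : ℝ, HasDerivAt (fun s : ℝ => p.2 + s * v.2) v.2 s := fun s => by
    simpa using ((hasDerivAt_id s).mul_const v.2).const_add p.2
  have hφψ : ∀ s : ℝ, p + s • v ∈ Ω → HasDerivAt φ (ψ s) s := by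
    intro s hs
    have hφeq : φ = fun s : ℝ => a * (p.1 + s * v.1) + b * (p.2 + s * v.2)
        + t * h (p + s • v) + ε * ((p.1 + s * v.1) ^ 2 + (p.2 + s * v.2) ^ 2) := by
      funext s; simp [hφ, hg, Prod.fst_add, Prod.snd_add, smul_eq_mul]
    rw [hφeq]
    have hh := comp_line_hasDerivAt hΩ hC2 p v hs
    have := ((((hl1 s).const_mul a).add ((hl2 s).const_mul b)).add (hh.const_mul t)).add
      ((((hl1 s).pow 2).add ((hl2 s).pow 2)).const_mul ε)
    refine this.congr_deriv ?_
    rw [hψ]; ring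
  -- derivative of ψ at 0
  obtain ⟨e11, e12, e22, e21⟩ := snd_fderiv_eq hΩ hC2 hp
  have hp0 : p + (0:ℝ) • v = p := by simp
  set D : ℝ := t * (v.1 * (v.1 * dX (dX h) p + v.2 * dX (dY h) p)
      + v.2 * (v.1 * dX (dY h) p + v.2 * dY (dY h) p))
      + ε * (2 * v.1 * v.1 + 2 * v.2 * v.2) with hD
  have hexp : ∀ w : ℝ × ℝ, fderiv ℝ (fderiv ℝ h) p v w
      = v.1 * fderiv ℝ (fderiv ℝ h) p (1,0) w + v.2 * fderiv ℝ (fderiv ℝ h) p (0,1) w := by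
    intro w
    rw [clm_expand (fderiv ℝ (fderiv ℝ h) p) v]
    simp [smul_eq_mul]
  have hψD : HasDerivAt ψ D 0 := by
    have hd1 : HasDerivAt (fun s : ℝ => dX h (p + s • v))
        (v.1 * dX (dX h) p + v.2 * dX (dY h) p) 0 := by
      have := dX_comp_line_hasDerivAt hΩ hC2 p v (s := 0) (by rwa [hp0]) (1,0)
      rw [hp0] at this
      rwa [hexp (1,0), e11, e21] at this
    have hd2 : HasDerivAt (fun s : ℝ => dY h (p + s • v))
        (v.1 * dX (dY h) p + v.2 * dY (dY h) p) 0 := by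
      have := dX_comp_line_hasDerivAt hΩ hC2 p v (s := 0) (by rwa [hp0]) (0,1)
      rw [hp0] at this
      rwa [hexp (0,1), e12, e22] at this
    have := ((hasDerivAt_const (0:ℝ) (a * v.1 + b * v.2)).add
      (((hd1.const_mul v.1).add (hd2.const_mul v.2)).const_mul t)).add
      (((((hl1 0).const_mul 2).mul_const v.1).add
        (((hl2 0).const_mul 2).mul_const v.2)).const_mul ε)
    refine this.congr_deriv ?_
    rw [hD]; ring
  have hD0 : 0 < D := by
    rw [hD, hA, hB, hC] at *
    nlinarith [hQ, hv, hε]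
  -- local max of φ at 0
  have hγ : Continuous (fun s : ℝ => p + s • v) := by continuity
  have hγ0 : Filter.Tendsto (fun s : ℝ => p + s • v) (nhds 0) (nhds p) := by
    have := hγ.tendsto 0
    rwa [hp0] at this
  have hev : ∀ᶠ s in nhds (0:ℝ), (p + s • v ∈ Ω ∧ g (p + s • v) ≤ g p) :=
    hγ0.eventually ((hΩ.eventually_mem hp).and hmax)
  obtain ⟨δ₀, hδ₀pos, hδ₀⟩ := Metric.eventually_nhds_iff.mp hev
  -- ψ 0 = 0
  have hφmax : IsLocalMax φ 0 := by
    filter_upwards [hγ0.eventually hmax] with s hs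
    show g (p + s • v) ≤ g (p + (0:ℝ) • v)
    rwa [hp0]
  have hψ0 : ψ 0 = 0 := by
    have h1 : deriv φ 0 = ψ 0 := (hφψ 0 (by rwa [hp0])).deriv
    rw [← h1, hφmax.deriv_eq_zero]
  -- ψ positive on the right of 0
  have hslope := (hasDerivAt_iff_tendsto_slope.mp hψD).eventually (eventually_gt_nhds hD0)
  rw [eventually_nhdsWithin_iff] at hslope
  obtain ⟨δ₂, hδ₂pos, hδ₂⟩ := Metric.eventually_nhds_iff.mp hslope
  have hψpos : ∀ s : ℝ, 0 < s → s < δ₂ → 0 < ψ s := by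
    intro s hs0 hsδ
    have hd : dist s 0 < δ₂ := by
      rw [Real.dist_eq, sub_zero, abs_of_pos hs0]; exact hsδ
    have := hδ₂ hd (by simpa using hs0.ne')
    rw [slope_def_field, hψ0, sub_zero, sub_zero] at this
    have := mul_pos this hs0
    rwa [div_mul_cancel₀ _ hs0.ne'] at this
  -- contradiction via strict monotonicity
  set r : ℝ := min δ₀ δ₂ / 2 with hr
  have hrpos : 0 < r := by positivity
  have hrδ₀ : r < δ₀ := by
    calc r < min δ₀ δ₂ := by rw [hr]; linarith [lt_min_iff.mpr ⟨hδ₀pos, hδ₂pos⟩]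
    _ ≤ δ₀ := min_le_left _ _
  have hrδ₂ : r < δ₂ := lt_of_lt_of_le (by rw [hr]; linarith [lt_min_iff.mpr ⟨hδ₀pos, hδ₂pos⟩])
    (min_le_right _ _)
  have hmem : ∀ s ∈ Set.Icc (0:ℝ) r, p + s • v ∈ Ω ∧ g (p + s • v) ≤ g p := by
    intro s hs
    apply hδ₀
    rw [Real.dist_eq, sub_zero, abs_of_nonneg hs.1]
    exact lt_of_le_of_lt hs.2 hrδ₀
  have hmono : StrictMonoOn φ (Set.Icc 0 r) := by
    apply strictMonoOn_of_deriv_pos (convex_Icc 0 r)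
    · intro s hs
      exact (hφψ s (hmem s hs).1).continuousAt.continuousWithinAt
    · intro s hs
      rw [interior_Icc] at hs
      rw [(hφψ s (hmem s ⟨hs.1.le, hs.2.le⟩).1).deriv]
      exact hψpos s hs.1 (lt_trans hs.2 hrδ₂)
  have h1 : φ 0 < φ r := hmono (Set.left_mem_Icc.2 hrpos.le) (Set.right_mem_Icc.2 hrpos.le) hrpos
  have h2 : φ r ≤ φ 0 := by
    have := (hmem r (Set.right_mem_Icc.2 hrpos.le)).2
    rw [hφ]
    simpa [hp0] using this
  linarith

end core2

lemma exists_frontier_max (hΩ : IsOpen Ω) (hC2 : ContDiffOn ℝ 2 h Ω)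
    (hsaddle : ∀ p ∈ Ω, dX (dX h) p * dY (dY h) p - (dX (dY h) p) ^ 2 ≤ 0)
    (a b t ε : ℝ) (hε : 0 < ε) {K : Set (ℝ × ℝ)} (hK : IsCompact K) (hKΩ : K ⊆ Ω)
    (hne : K.Nonempty) :
    ∃ p ∈ frontier K, IsMaxOn (fun q : ℝ × ℝ => a * q.1 + b * q.2 + t * h q
      + ε * (q.1 ^ 2 + q.2 ^ 2)) K p := by
  have hhc : ContinuousOn h K := (hC2.continuousOn).mono hKΩ
  have hgc : ContinuousOn (fun q : ℝ × ℝ => a * q.1 + b * q.2 + t * h q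
      + ε * (q.1 ^ 2 + q.2 ^ 2)) K :=
    (((continuousOn_const.mul continuous_fst.continuousOn).add
      (continuousOn_const.mul continuous_snd.continuousOn)).add
      (continuousOn_const.mul hhc)).add
      (continuousOn_const.mul ((continuous_fst.continuousOn.pow 2).add
        (continuous_snd.continuousOn.pow 2)))
  obtain ⟨p, hpK, hpmax⟩ := hK.exists_isMaxOn hne hgc
  by_cases hpf : p ∈ frontier K
  · exact ⟨p, hpf, hpmax⟩
  exfalso
  have hpint : p ∈ interior K := by
    rw [hK.isClosed.frontier_eq] at hpf
    by_contra hcon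
    exact hpf ⟨hpK, hcon⟩
  apply no_local_max hΩ hC2 hsaddle a b t ε hε (hKΩ hpK)
  filter_upwards [isOpen_interior.mem_nhds hpint] with x hx
  exact hpmax (interior_subset hx)

/-- Convex hull property for saddle graphs: if `h` is C² on an open set `Ω` with
`h_xx h_yy - h_xy ^ 2 ≤ 0` everywhere, then for every compact `K ⊆ Ω` the graph of `h` over
`K` lies in the convex hull (in ℝ³) of the graph of `h` over the boundary `∂K`. -/
theorem stmt1 (Ω : Set (ℝ × ℝ)) (hΩ : IsOpen Ω) (h : ℝ × ℝ → ℝ)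
    (hC2 : ContDiffOn ℝ 2 h Ω)
    (hsaddle : ∀ p ∈ Ω, dX (dX h) p * dY (dY h) p - (dX (dY h) p) ^ 2 ≤ 0)
    (K : Set (ℝ × ℝ)) (hK : IsCompact K) (hKΩ : K ⊆ Ω) :
    (fun p : ℝ × ℝ => (p.1, p.2, h p)) '' K ⊆
      convexHull ℝ ((fun p : ℝ × ℝ => (p.1, p.2, h p)) '' (frontier K)) := by
  rintro _ ⟨q, hqK, rfl⟩
  by_contra hq
  set S := (fun p : ℝ × ℝ => (p.1, p.2, h p)) '' (frontier K) with hS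
  have hfr : frontier K ⊆ K := hK.isClosed.frontier_subset
  have hhc : ContinuousOn h K := (hC2.continuousOn).mono hKΩ
  have hφc : ContinuousOn (fun p : ℝ × ℝ => (p.1, p.2, h p)) K :=
    continuous_fst.continuousOn.prodMk (continuous_snd.continuousOn.prodMk hhc)
  have hfrc : IsCompact (frontier K) :=
    hK.of_isClosed_subset isClosed_frontier hfr
  have hScomp : IsCompact S := hfrc.image_of_continuousOn (hφc.mono hfr)
  have hclosed : IsClosed (convexHull ℝ S) := (isCompact_convexHull3 hScomp).isClosed
  obtain ⟨f, u, hfu, hub⟩ :=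
    geometric_hahn_banach_point_closed (convex_convexHull ℝ S) hclosed hq
  set a := -(f (1,0,0)) with ha
  set b := -(f (0,1,0)) with hb
  set t := -(f (0,0,1)) with ht
  set c := -u with hc
  have hbdry : ∀ p ∈ frontier K, a * p.1 + b * p.2 + t * h p < c := by
    intro p hp
    have := hub _ (subset_convexHull ℝ S ⟨p, hp, rfl⟩)
    have hexp := clm_expand3 f p.1 p.2 (h p)
    rw [ha, hb, ht, hc]
    nlinarith [this, hexp]
  have hLq : c < a * q.1 + b * q.2 + t * h q := by
    have hexp := clm_expand3 f q.1 q.2 (h q)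
    rw [ha, hb, ht, hc]
    nlinarith [hfu, hexp]
  -- bound on |p|² over K
  obtain ⟨p₀, hp₀K, hp₀max⟩ := hK.exists_isMaxOn ⟨q, hqK⟩
    (((continuous_fst.pow 2).add (continuous_snd.pow 2)).continuousOn)
  set M : ℝ := p₀.1 ^ 2 + p₀.2 ^ 2 + 1 with hM
  have hM0 : 0 < M := by positivity
  have hMle : ∀ p ∈ K, p.1 ^ 2 + p.2 ^ 2 ≤ M := by
    intro p hp
    have h' : p.1 ^ 2 + p.2 ^ 2 ≤ p₀.1 ^ 2 + p₀.2 ^ 2 := hp₀max hp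
    rw [hM]; linarith
  set L := a * q.1 + b * q.2 + t * h q with hL
  set ε : ℝ := (L - c) / (2 * M) with hε'
  have hε : 0 < ε := by
    apply div_pos (by linarith) (by linarith)
  obtain ⟨ps, hpsf, hpsmax⟩ := exists_frontier_max hΩ hC2 hsaddle a b t ε hε hK hKΩ ⟨q, hqK⟩
  have h1 : a * q.1 + b * q.2 + t * h q + ε * (q.1 ^ 2 + q.2 ^ 2)
      ≤ a * ps.1 + b * ps.2 + t * h ps + ε * (ps.1 ^ 2 + ps.2 ^ 2) := hpsmax hqK
  have h2 : a * ps.1 + b * ps.2 + t * h ps < c := hbdry ps hpsf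
  have h3 : ps.1 ^ 2 + ps.2 ^ 2 ≤ M := hMle ps (hfr hpsf)
  have h4 : 0 ≤ ε * (q.1 ^ 2 + q.2 ^ 2) := mul_nonneg hε.le (by positivity)
  have h5 : ε * (ps.1 ^ 2 + ps.2 ^ 2) ≤ ε * M := mul_le_mul_of_nonneg_left h3 hε.le
  rw [← hL] at h1
  have h6 : ε * M = (L - c) / 2 := by
    rw [hε']
    field_simp
  clear_value a b t c M L ε
  linarith
end

section
/- Let ω : ℝ² → ℝ be a homogeneous polynomial of degree n ≥ 2 satisfying ω_xx·ω_yy − ω_xy² ≡ 0. Then there exist a ∈ ℝ and (α, β) ∈ ℝ² such that ω(x,y) = a·(αx + βy)ⁿ for all (x,y). -/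
open MvPolynomial

namespace Stmt3Aux

noncomputable section

abbrev R2 := MvPolynomial (Fin 2) ℝ

lemma pd_comm (i j : Fin 2) (p : R2) :
    pderiv i (pderiv j p) = pderiv j (pderiv i p) := by
  rcases eq_or_ne i j with rfl | h
  · rfl
  · induction p using MvPolynomial.induction_on' with
    | monomial s a =>
        have h1 : ((s - Finsupp.single j 1 : Fin 2 →₀ ℕ)) i = s i := by
          rw [Finsupp.tsub_apply, Finsupp.single_apply, if_neg (Ne.symm h), tsub_zero]
        have h2 : ((s - Finsupp.single i 1 : Fin 2 →₀ ℕ)) j = s j := by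
          rw [Finsupp.tsub_apply, Finsupp.single_apply, if_neg h, tsub_zero]
        rw [pderiv_monomial, pderiv_monomial, pderiv_monomial, pderiv_monomial, h1, h2,
          tsub_tsub, tsub_tsub, add_comm (Finsupp.single j 1)]
        congr 1
        ring
    | add p q hp hq => rw [map_add, map_add, map_add, map_add, hp, hq]

lemma degree_add (u v : Fin 2 →₀ ℕ) : (u + v).degree = u.degree + v.degree := by
  simp [Finsupp.degree_eq_weight_one, map_add]

lemma degree_single (i : Fin 2) : (Finsupp.single i 1).degree = 1 := by
  simp [Finsupp.degree_single]

lemma deg_of_mem {p : R2} {n : ℕ} (hp : p.IsHomogeneous n) {d : Fin 2 →₀ ℕ}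
    (hd : d ∈ p.support) : d.degree = n := by
  by_contra hne
  exact (mem_support_iff.1 hd) (hp.coeff_eq_zero hne)

lemma X_mul_pderiv_mon (i : Fin 2) (d : Fin 2 →₀ ℕ) (a : ℝ) :
    X i * pderiv i (monomial d a) = monomial d (a * d i) := by
  rw [pderiv_monomial]
  rcases Nat.eq_zero_or_pos (d i) with h0 | h1
  · rw [h0]
    push_cast
    rw [mul_zero, monomial_zero, monomial_zero, mul_zero]
  · rw [X, monomial_mul, one_mul, add_comm,
      tsub_add_cancel_of_le (Finsupp.single_le_iff.2 h1)]

lemma euler_mon (d : Fin 2 →₀ ℕ) (a : ℝ) :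
    X 0 * pderiv 0 (monomial d a) + X 1 * pderiv 1 (monomial d a)
      = C ((d.degree : ℝ)) * monomial d a := by
  rw [X_mul_pderiv_mon, X_mul_pderiv_mon, C_mul_monomial, ← map_add]
  congr 1
  have hdeg : d.degree = d 0 + d 1 := by
    rw [show d.degree = ∑ i : Fin 2, d i from
      Finset.sum_subset (Finset.subset_univ _)
        (fun x _ hx => Finsupp.notMem_support_iff.1 hx), Fin.sum_univ_two]
  rw [hdeg]
  push_cast
  ring

lemma euler {n : ℕ} {p : R2} (hp : p.IsHomogeneous n) :
    X 0 * pderiv 0 p + X 1 * pderiv 1 p = C (n : ℝ) * p := by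
  conv_lhs => rw [p.as_sum]
  conv_rhs => rw [p.as_sum]
  rw [map_sum, map_sum, Finset.mul_sum, Finset.mul_sum, Finset.mul_sum,
    ← Finset.sum_add_distrib]
  refine Finset.sum_congr rfl fun d hd => ?_
  rw [← deg_of_mem hp hd]
  exact euler_mon d _

lemma hom_pderiv {n : ℕ} {p : R2} (hp : p.IsHomogeneous n) (i : Fin 2) :
    (pderiv i p).IsHomogeneous (n - 1) := by
  have hps : pderiv i p = ∑ d ∈ p.support, pderiv i (monomial d (coeff d p)) := by
    conv_lhs => rw [p.as_sum]
    rw [map_sum]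
  rw [← mem_homogeneousSubmodule, hps]
  refine Submodule.sum_mem _ fun d hd => ?_
  rw [mem_homogeneousSubmodule, pderiv_monomial]
  rcases Nat.eq_zero_or_pos (d i) with h0 | h1
  · rw [h0]
    push_cast
    rw [mul_zero, monomial_zero]
    exact isHomogeneous_zero _ _ _
  · refine isHomogeneous_monomial _ ?_
    have hd' : d.degree = n := deg_of_mem hp hd
    have : (d - Finsupp.single i 1) + Finsupp.single i 1 = d :=
      tsub_add_cancel_of_le (Finsupp.single_le_iff.2 h1)
    have h2 := congrArg Finsupp.degree this
    rw [degree_add, degree_single, hd'] at h2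
    omega

lemma hom0 {p : R2} (hp : p.IsHomogeneous 0) : p = C (coeff 0 p) := by
  ext d
  rcases eq_or_ne d 0 with rfl | hd
  · simp
  · rw [coeff_C, if_neg (by exact fun h => hd h.symm)]
    exact hp.coeff_eq_zero (by
      rw [Ne, Finsupp.degree_eq_zero_iff]
      exact hd)

lemma rel_step {g h u v : R2} (hg : g ≠ 0)
    (h0 : g * pderiv 0 h = h * pderiv 0 g) (h1 : g * pderiv 1 h = h * pderiv 1 g)
    (huv : g * u = h * v) (i : Fin 2) : g * pderiv i u = h * pderiv i v := by
  have hd := congrArg (pderiv i) huv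
  rw [pderiv_mul, pderiv_mul] at hd
  have hbase : g * pderiv i h = h * pderiv i g := by fin_cases i <;> assumption
  apply mul_left_cancel₀ hg
  linear_combination g * hd + v * hbase - pderiv i g * huv

lemma rel_iter {g h : R2} (hg : g ≠ 0)
    (h0 : g * pderiv 0 h = h * pderiv 0 g) (h1 : g * pderiv 1 h = h * pderiv 1 g)
    (a b : ℕ) :
    g * (pderiv (0 : Fin 2))^[a] ((pderiv (1 : Fin 2))^[b] h)
      = h * (pderiv (0 : Fin 2))^[a] ((pderiv (1 : Fin 2))^[b] g) := by
  induction a with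
  | zero =>
    simp only [Function.iterate_zero, id_eq]
    induction b with
    | zero => simpa using mul_comm g h
    | succ b ih =>
        rw [Function.iterate_succ_apply', Function.iterate_succ_apply']
        exact rel_step hg h0 h1 ih 1
  | succ a ih =>
      rw [Function.iterate_succ_apply', Function.iterate_succ_apply']
      exact rel_step hg h0 h1 ih 0

lemma iter_comm (b : ℕ) (p : R2) :
    (pderiv (1 : Fin 2))^[b] (pderiv 0 p) = pderiv 0 ((pderiv (1 : Fin 2))^[b] p) := by
  induction b with
  | zero => rfl
  | succ b ih => rw [Function.iterate_succ_apply', Function.iterate_succ_apply', ih,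
      pd_comm]

lemma hom_iter1 (i : Fin 2) {p : R2} {n : ℕ} (hp : p.IsHomogeneous n) (b : ℕ) :
    ((pderiv i)^[b] p).IsHomogeneous (n - b) := by
  induction b with
  | zero => simpa using hp
  | succ b ih =>
      rw [Function.iterate_succ_apply']
      have := hom_pderiv ih i
      rwa [show n - b - 1 = n - (b + 1) by omega] at this

lemma hom_iter {p : R2} {n : ℕ} (hp : p.IsHomogeneous n) (a b : ℕ) :
    ((pderiv (0 : Fin 2))^[a] ((pderiv (1 : Fin 2))^[b] p)).IsHomogeneous (n - b - a) :=
  hom_iter1 0 (hom_iter1 1 hp b) a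

lemma exists_const {m : ℕ} : ∀ {g : R2}, g.IsHomogeneous m → g ≠ 0 →
    ∃ (a b : ℕ) (c : ℝ), c ≠ 0 ∧
      (pderiv (0 : Fin 2))^[a] ((pderiv (1 : Fin 2))^[b] g) = C c := by
  induction m with
  | zero =>
      intro g hg hg0
      refine ⟨0, 0, coeff 0 g, ?_, ?_⟩
      · intro h
        exact hg0 (by rw [hom0 hg, h, map_zero])
      · simpa using (hom0 hg).symm.symm
  | succ m ih =>
      intro g hg hg0
      by_cases h1 : pderiv 1 g = 0
      · have h0 : pderiv 0 g ≠ 0 := by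
          intro h0
          apply hg0
          have e := euler hg
          rw [h0, h1, mul_zero, mul_zero, add_zero] at e
          have hc : (C (((m + 1 : ℕ)) : ℝ) : R2) ≠ 0 := by
            simp only [ne_eq, C_eq_zero]
            positivity
          rcases mul_eq_zero.1 e.symm with h | h
          · exact absurd h hc
          · exact h
        obtain ⟨a, b, c, hc, he⟩ :=
          ih (by simpa using hom_pderiv hg 0) h0
        refine ⟨a + 1, b, c, hc, ?_⟩
        rw [Function.iterate_succ_apply, ← iter_comm, he]
      · obtain ⟨a, b, c, hc, he⟩ := ih (by simpa using hom_pderiv hg 1) h1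
        refine ⟨a, b + 1, c, hc, ?_⟩
        rw [Function.iterate_succ_apply, he]

lemma proportional {m : ℕ} {g h : R2} (hgm : g.IsHomogeneous m) (hhm : h.IsHomogeneous m)
    (hg : g ≠ 0) (h0 : g * pderiv 0 h = h * pderiv 0 g)
    (h1 : g * pderiv 1 h = h * pderiv 1 g) :
    ∃ c : ℝ, h = C c * g := by
  obtain ⟨a, b, c, hc, he⟩ := exists_const hgm hg
  have hCc : (C c : R2) ≠ 0 := by simpa using hc
  have hdeg : m - b - a = 0 := by
    have hhom := hom_iter hgm a b
    rw [he] at hhom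
    exact hhom.inj_right (isHomogeneous_C _ c) hCc
  have hdh : ((pderiv (0 : Fin 2))^[a] ((pderiv (1 : Fin 2))^[b] h)).IsHomogeneous 0 := by
    have := hom_iter hhm a b
    rwa [hdeg] at this
  set c' := coeff 0 ((pderiv (0 : Fin 2))^[a] ((pderiv (1 : Fin 2))^[b] h)) with hc'
  have hdh' : (pderiv (0 : Fin 2))^[a] ((pderiv (1 : Fin 2))^[b] h) = C c' := hom0 hdh
  have key : g * C c' = h * C c := by
    rw [← hdh', ← he]
    exact rel_iter hg h0 h1 a b
  refine ⟨c' / c, ?_⟩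
  apply mul_right_cancel₀ hCc
  have hdiv : (C (c' / c) : R2) * C c = C c' := by
    rw [← C_mul, div_mul_cancel₀ _ hc]
  linear_combination -key - g * hdiv

lemma key : ∀ (n : ℕ) (f : R2), f.IsHomogeneous n → ∀ (α β : ℝ), (α ≠ 0 ∨ β ≠ 0) →
    C β * pderiv 0 f = C α * pderiv 1 f →
    ∃ a : ℝ, f = C a * (C α * X 0 + C β * X 1) ^ n := by
  intro n
  induction n with
  | zero =>
      intro f hf α β _ _
      exact ⟨coeff 0 f, by rw [pow_zero, mul_one]; exact hom0 hf⟩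
  | succ n ih =>
      intro f hf α β hne hrel
      set ℓ : R2 := C α * X 0 + C β * X 1 with hℓ
      have hℓ0 : ℓ ≠ 0 := by
        intro hz
        have h := congrArg (eval ![α, β]) hz
        simp [hℓ] at h
        rcases hne with h' | h' <;> nlinarith [mul_self_pos.2 h', sq_nonneg α, sq_nonneg β]
      have hg : (pderiv 0 f).IsHomogeneous n := by simpa using hom_pderiv hf 0
      have hh : (pderiv 1 f).IsHomogeneous n := by simpa using hom_pderiv hf 1
      have hrelg : C β * pderiv 0 (pderiv 0 f) = C α * pderiv 1 (pderiv 0 f) := by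
        have h := congrArg (pderiv 0) hrel
        rw [pderiv_C_mul, pderiv_C_mul] at h
        rw [h, pd_comm]
      have hrelh : C β * pderiv 0 (pderiv 1 f) = C α * pderiv 1 (pderiv 1 f) := by
        have h := congrArg (pderiv 1) hrel
        rw [pderiv_C_mul, pderiv_C_mul] at h
        rw [← pd_comm, h]
      obtain ⟨a₁, e₁⟩ := ih _ hg α β hne hrelg
      obtain ⟨a₂, e₂⟩ := ih _ hh α β hne hrelh
      have hba : β * a₁ = α * a₂ := by
        have h := hrel
        rw [e₁, e₂] at h
        have h2 : (C β * C a₁ : R2) * ℓ ^ n = (C α * C a₂) * ℓ ^ n := by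
          linear_combination h
        have h3 := mul_right_cancel₀ (pow_ne_zero n hℓ0) h2
        rw [← C_mul, ← C_mul] at h3
        exact C_injective _ _ h3
      set t : ℝ := if α = 0 then a₂ / β else a₁ / α with ht
      have hlin : C a₁ * X 0 + C a₂ * X 1 = C t * ℓ := by
        rcases eq_or_ne α 0 with hα | hα
        · have hβ : β ≠ 0 := hne.resolve_left (not_not_intro hα)
          have ha₁ : a₁ = 0 := by
            have h := hba
            rw [hα, zero_mul] at h
            rcases mul_eq_zero.1 h with h | h
            · exact absurd h hβ
            · exact h
          have hca₁ : (C a₁ : R2) = 0 := by rw [ha₁, map_zero]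
          have hcα : (C α : R2) = 0 := by rw [hα, map_zero]
          have hctβ : (C (a₂ / β) : R2) * C β = C a₂ := by
            rw [← C_mul, div_mul_cancel₀ _ hβ]
          rw [ht, if_pos hα, hℓ]
          linear_combination X 0 * hca₁ - C (a₂ / β) * X 0 * hcα - X 1 * hctβ
        · have hct : (C (a₁ / α) : R2) * C α = C a₁ := by
            rw [← C_mul, div_mul_cancel₀ _ hα]
          have hca₂ : (C (a₁ / α) : R2) * C β = C a₂ := by
            rw [← C_mul]
            congr 1
            field_simp
            linarith [hba]
          rw [ht, if_neg hα, hℓ]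
          linear_combination (-(X 0)) * hct - X 1 * hca₂
      have euf := euler hf
      rw [e₁, e₂] at euf
      refine ⟨t / ((n : ℝ) + 1), ?_⟩
      have hcn : (C (((n + 1 : ℕ)) : ℝ) : R2) ≠ 0 := by
        simp only [ne_eq, C_eq_zero]
        positivity
      apply mul_left_cancel₀ hcn
      rw [← euf]
      have hC : (C (((n + 1 : ℕ)) : ℝ) : R2) * C (t / ((n : ℝ) + 1)) = C t := by
        rw [← C_mul]
        congr 1
        push_cast
        field_simp
      linear_combination (ℓ ^ n) * hlin - (ℓ ^ (n + 1)) * hC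

end

end Stmt3Aux

open Stmt3Aux in
/-- A homogeneous polynomial `ω` of degree `n ≥ 2` in two variables with identically
vanishing Hessian determinant is of the form `ω(x,y) = a (αx + βy)^n`. -/
theorem stmt3 (n : ℕ) (hn : 2 ≤ n) (ω : MvPolynomial (Fin 2) ℝ)
    (hom : ω.IsHomogeneous n)
    (hflat : pderiv 0 (pderiv 0 ω) * pderiv 1 (pderiv 1 ω)
      - (pderiv 0 (pderiv 1 ω)) ^ 2 = 0) :
    ∃ a α β : ℝ, ∀ x y : ℝ, eval ![x, y] ω = a * (α * x + β * y) ^ n := by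
  by_cases hx : pderiv 0 ω = 0
  · obtain ⟨a, ha⟩ := key n ω hom 0 1 (Or.inr one_ne_zero)
      (by rw [hx, mul_zero, map_zero, zero_mul])
    refine ⟨a, 0, 1, fun x y => ?_⟩
    rw [ha]
    simp
  · have hfx : (pderiv 0 ω).IsHomogeneous (n - 1) := hom_pderiv hom 0
    have hfy : (pderiv 1 ω).IsHomogeneous (n - 1) := hom_pderiv hom 1
    have e1 := euler hfx
    have e2 := euler hfy
    rw [pd_comm 1 0 ω] at e1
    have hCN : (C (((n - 1 : ℕ)) : ℝ) : R2) ≠ 0 := by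
      simp only [ne_eq, C_eq_zero, Nat.cast_eq_zero]
      omega
    have rel1 : pderiv 0 ω * pderiv 1 (pderiv 1 ω)
        = pderiv 1 ω * pderiv 0 (pderiv 1 ω) := by
      have h1 : (C (((n - 1 : ℕ)) : ℝ) : R2) *
          (pderiv 0 ω * pderiv 1 (pderiv 1 ω) - pderiv 1 ω * pderiv 0 (pderiv 1 ω)) = 0 := by
        linear_combination (-(pderiv 1 (pderiv 1 ω))) * e1
          + (pderiv 0 (pderiv 1 ω)) * e2 + X 0 * hflat
      have h2 := (mul_eq_zero.1 h1).resolve_left hCN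
      exact sub_eq_zero.1 h2
    have rel2 : pderiv 1 ω * pderiv 0 (pderiv 0 ω)
        = pderiv 0 ω * pderiv 0 (pderiv 1 ω) := by
      have h1 : (C (((n - 1 : ℕ)) : ℝ) : R2) *
          (pderiv 1 ω * pderiv 0 (pderiv 0 ω) - pderiv 0 ω * pderiv 0 (pderiv 1 ω)) = 0 := by
        linear_combination (pderiv 0 (pderiv 1 ω)) * e1
          - (pderiv 0 (pderiv 0 ω)) * e2 + X 1 * hflat
      have h2 := (mul_eq_zero.1 h1).resolve_left hCN
      exact sub_eq_zero.1 h2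
    obtain ⟨c, hc⟩ := proportional hfx hfy hx rel2.symm
      (by rw [pd_comm 1 0 ω]; exact rel1)
    obtain ⟨a, ha⟩ := key n ω hom 1 c (Or.inl one_ne_zero)
      (by rw [map_one, one_mul, hc])
    refine ⟨a, 1, c, fun x y => ?_⟩
    rw [ha]
    simp
end

section
/- Let h(x,y) = xⁿ·w(x,y) with n > 2, where w is real analytic near the origin with w(0, y₀) ≠ 0 for some y₀ ≠ 0. Write ν = (cos θ, sin θ) with cos θ ≠ 0 and h_ν = ⟨∇h, ν⟩. Then for (x,y) with x ≠ 0 near (0, y₀), the normalized gradient ∇h_ν(x,y)/|∇h_ν(x,y)| converges to (±1, 0) as (x,y) → (0, y₀) with x kept of a fixed sign; in particular the line field generated by ∇h_ν extends real analytically across the segment {x = 0} near (0, y₀), and the extended line field is orthogonal to the segment {x = 0} there. -/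
open Filter Topology

lemma dX_analytic {U : Set (ℝ × ℝ)} {f : ℝ × ℝ → ℝ}
    (hf : AnalyticOnNhd ℝ f U) : AnalyticOnNhd ℝ (dX f) U :=
  (ContinuousLinearMap.apply ℝ ℝ ((1:ℝ),(0:ℝ))).comp_analyticOnNhd (hf.fderiv)

lemma dY_analytic {U : Set (ℝ × ℝ)} {f : ℝ × ℝ → ℝ}
    (hf : AnalyticOnNhd ℝ f U) : AnalyticOnNhd ℝ (dY f) U :=
  (ContinuousLinearMap.apply ℝ ℝ ((0:ℝ),(1:ℝ))).comp_analyticOnNhd (hf.fderiv)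

lemma hasFDerivAt_pow_fst (m : ℕ) (p : ℝ × ℝ) :
    HasFDerivAt (fun q : ℝ × ℝ => q.1 ^ m)
      ((m * p.1 ^ (m-1)) • ContinuousLinearMap.fst ℝ ℝ ℝ) p :=
  (hasDerivAt_pow m p.1).comp_hasFDerivAt p hasFDerivAt_fst

lemma dXY_pow_mul {f : ℝ × ℝ → ℝ} {p : ℝ × ℝ} (hf : DifferentiableAt ℝ f p) (k : ℕ) :
    dX (fun q => q.1 ^ (k+1) * f q) p = (k+1) * p.1 ^ k * f p + p.1 ^ (k+1) * dX f p ∧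
    dY (fun q => q.1 ^ (k+1) * f q) p = p.1 ^ (k+1) * dY f p := by
  have H := (hasFDerivAt_pow_fst (k+1) p).mul hf.hasFDerivAt
  constructor
  · rw [dX, show (fun q : ℝ × ℝ => q.1 ^ (k+1) * f q) = (fun q : ℝ × ℝ => q.1 ^ (k+1)) * f from rfl, H.fderiv]
    simp [dX, smul_eq_mul]
    push_cast
    ring
  · rw [dY, show (fun q : ℝ × ℝ => q.1 ^ (k+1) * f q) = (fun q : ℝ × ℝ => q.1 ^ (k+1)) * f from rfl, H.fderiv]
    simp [dY, smul_eq_mul]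

lemma diff_pow_mul {f : ℝ × ℝ → ℝ} {p : ℝ × ℝ} (hf : DifferentiableAt ℝ f p) (k : ℕ) :
    DifferentiableAt ℝ (fun q : ℝ × ℝ => q.1 ^ k * f q) p :=
  ((hasFDerivAt_pow_fst k p).mul hf.hasFDerivAt).differentiableAt

lemma dX_lin {f g k : ℝ × ℝ → ℝ} {p : ℝ × ℝ} (a b c : ℝ)
    (hf : DifferentiableAt ℝ f p) (hg : DifferentiableAt ℝ g p) (hk : DifferentiableAt ℝ k p)
    (v : ℝ × ℝ) :
    fderiv ℝ (fun q => a * f q + b * g q + c * k q) p v =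
      a * fderiv ℝ f p v + b * fderiv ℝ g p v + c * fderiv ℝ k p v := by
  have H := (((hf.hasFDerivAt.const_mul a).add (hg.hasFDerivAt.const_mul b)).add
    (hk.hasFDerivAt.const_mul c))
  rw [show (fun q => a * f q + b * g q + c * k q) = ((fun y => a * f y) + fun y => b * g y) + fun y => c * k y from rfl, H.fderiv]
  simp

lemma normalize_smul (t : ℝ) (v : ℝ × ℝ) :
    ‖t • v‖⁻¹ • (t • v) = (|t|⁻¹ * t) • (‖v‖⁻¹ • v) := by
  rw [norm_smul, smul_smul, smul_smul, Real.norm_eq_abs, mul_inv]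
  ring_nf

lemma side_limit {l : Filter (ℝ × ℝ)} {G V : ℝ × ℝ → ℝ × ℝ} {c s : ℝ}
    (hs : s = 1 ∨ s = -1) (hc : c ≠ 0)
    (hev : ∀ᶠ p in l, ‖G p‖⁻¹ • G p = s • (‖V p‖⁻¹ • V p))
    (hV : Filter.Tendsto V l (nhds (c, 0))) :
    ∃ ε : ℝ, (ε = 1 ∨ ε = -1) ∧
      Filter.Tendsto (fun p => ‖G p‖⁻¹ • G p) l (nhds (ε, 0)) := by
  have hL : ‖((c : ℝ), (0 : ℝ))‖ = |c| := by
    simp [Prod.norm_def, abs_nonneg]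
  refine ⟨s * (|c|⁻¹ * c), ?_, ?_⟩
  · rcases hs with rfl | rfl <;> rcases lt_or_gt_of_ne hc with h | h
    · right; rw [abs_of_neg h]; field_simp
    · left; rw [abs_of_pos h]; field_simp
    · left; rw [abs_of_neg h]; field_simp
    · right; rw [abs_of_pos h]; field_simp
  · have h1 : Tendsto (fun p => ‖V p‖⁻¹ • V p) l (𝓝 (‖((c:ℝ),(0:ℝ))‖⁻¹ • (c, 0))) :=
      (hV.norm.inv₀ (by rw [hL]; exact abs_ne_zero.2 hc)).smul hV
    have h2 := h1.const_smul s
    have : s • (‖((c:ℝ),(0:ℝ))‖⁻¹ • ((c:ℝ),(0:ℝ))) = (s * (|c|⁻¹ * c), (0:ℝ)) := by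
      rw [hL]; simp [Prod.smul_mk, smul_eq_mul, mul_comm, mul_assoc]
    rw [this] at h2
    exact h2.congr' (by filter_upwards [hev] with p hp using hp.symm)

/-- For `h(x,y) = xⁿ w(x,y)` with `n > 2`, `w` real analytic, `w(0,y₀) ≠ 0`, `y₀ ≠ 0`, and
`ν = (cos θ, sin θ)` with `cos θ ≠ 0`, the normalized gradient of `h_ν = ⟨∇h, ν⟩` converges
to `(±1, 0)` as `(x,y) → (0,y₀)` with `x` of a fixed sign; in particular the line field it
generates extends across the segment `{x = 0}` orthogonally to it. -/
theorem stmt4 (n : ℕ) (hn : 2 < n) (w : ℝ × ℝ → ℝ) (U : Set (ℝ × ℝ)) (hU : IsOpen U)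
    (h0U : ((0 : ℝ), (0 : ℝ)) ∈ U) (hw : AnalyticOnNhd ℝ w U)
    (y₀ : ℝ) (hy₀ : y₀ ≠ 0) (hy₀U : ((0 : ℝ), y₀) ∈ U) (hw0 : w (0, y₀) ≠ 0)
    (θ : ℝ) (hθ : Real.cos θ ≠ 0)
    (h : ℝ × ℝ → ℝ) (hh : h = fun p => p.1 ^ n * w p)
    (hν : ℝ × ℝ → ℝ) (hhν : hν = fun p => Real.cos θ * dX h p + Real.sin θ * dY h p)
    (G : ℝ × ℝ → ℝ × ℝ) (hG : G = fun p => (dX hν p, dY hν p)) :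
    (∃ ε : ℝ, (ε = 1 ∨ ε = -1) ∧
      Filter.Tendsto (fun p => ‖G p‖⁻¹ • G p)
        (nhdsWithin ((0 : ℝ), y₀) {p : ℝ × ℝ | 0 < p.1}) (nhds (ε, 0))) ∧
    (∃ ε : ℝ, (ε = 1 ∨ ε = -1) ∧
      Filter.Tendsto (fun p => ‖G p‖⁻¹ • G p)
        (nhdsWithin ((0 : ℝ), y₀) {p : ℝ × ℝ | p.1 < 0}) (nhds (ε, 0))) := by
  subst hh hhν hG
  obtain ⟨m, rfl⟩ : ∃ m, n = m + 3 := ⟨n - 3, by omega⟩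
  set cθ := Real.cos θ with hcθ
  set sθ := Real.sin θ with hsθ
  -- analyticity of partial derivatives
  have hwx : AnalyticOnNhd ℝ (dX w) U := dX_analytic hw
  have hwy : AnalyticOnNhd ℝ (dY w) U := dY_analytic hw
  have hwxx : AnalyticOnNhd ℝ (dX (dX w)) U := dX_analytic hwx
  have hwxy : AnalyticOnNhd ℝ (dY (dX w)) U := dY_analytic hwx
  have hwyx : AnalyticOnNhd ℝ (dX (dY w)) U := dX_analytic hwy
  have hwyy : AnalyticOnNhd ℝ (dY (dY w)) U := dY_analytic hwy
  -- the formula F for hν on U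
  set F : ℝ × ℝ → ℝ :=
    fun p => ((m+3 : ℝ) * cθ) * (p.1 ^ (m+2) * w p) + cθ * (p.1 ^ (m+3) * dX w p)
      + sθ * (p.1 ^ (m+3) * dY w p) with hF
  have hνF : ∀ p ∈ U, (cθ * dX (fun q : ℝ × ℝ => q.1 ^ (m+3) * w q) p
      + sθ * dY (fun q : ℝ × ℝ => q.1 ^ (m+3) * w q) p) = F p := by
    intro p hp
    have hdw := (hw p hp).differentiableAt
    have h1 := (dXY_pow_mul hdw (m+2)).1
    have h2 := (dXY_pow_mul hdw (m+2)).2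
    rw [show m+2+1 = m+3 from rfl] at h1 h2
    rw [h1, h2, hF]
    push_cast
    ring
  -- components R₁, R₂, V
  set R₁ : ℝ × ℝ → ℝ := fun p => 2*(m+3 : ℝ)*cθ*dX w p + (m+3 : ℝ)*sθ*dY w p
      + p.1*(cθ*dX (dX w) p + sθ*dX (dY w) p) with hR₁
  set R₂ : ℝ × ℝ → ℝ := fun p => (m+3 : ℝ)*cθ*dY w p
      + p.1*(cθ*dY (dX w) p + sθ*dY (dY w) p) with hR₂
  set A : ℝ := ((m:ℝ)+3)*((m:ℝ)+2)*cθ with hA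
  set V : ℝ × ℝ → ℝ × ℝ := fun p => (A * w p + p.1 * R₁ p, p.1 * R₂ p) with hV
  -- the key factorization G = x^(m+1) • V on U
  have hGV : ∀ p ∈ U, (dX (fun q : ℝ × ℝ => cθ * dX (fun r : ℝ × ℝ => r.1 ^ (m+3) * w r) q
        + sθ * dY (fun r : ℝ × ℝ => r.1 ^ (m+3) * w r) q) p,
      dY (fun q : ℝ × ℝ => cθ * dX (fun r : ℝ × ℝ => r.1 ^ (m+3) * w r) q
        + sθ * dY (fun r : ℝ × ℝ => r.1 ^ (m+3) * w r) q) p)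
      = p.1 ^ (m+1) • V p := by
    intro p hp
    have hmem : U ∈ 𝓝 p := hU.mem_nhds hp
    have hEq : (fun q : ℝ × ℝ => cθ * dX (fun r : ℝ × ℝ => r.1 ^ (m+3) * w r) q
        + sθ * dY (fun r : ℝ × ℝ => r.1 ^ (m+3) * w r) q) =ᶠ[𝓝 p] F := by
      filter_upwards [hmem] with q hq using hνF q hq
    have hfd : fderiv ℝ (fun q : ℝ × ℝ => cθ * dX (fun r : ℝ × ℝ => r.1 ^ (m+3) * w r) q
        + sθ * dY (fun r : ℝ × ℝ => r.1 ^ (m+3) * w r) q) p = fderiv ℝ F p := hEq.fderiv_eq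
    have hdiff1 : DifferentiableAt ℝ (fun q : ℝ × ℝ => q.1 ^ (m+2) * w q) p :=
      diff_pow_mul (hw p hp).differentiableAt (m+2)
    have hdiff2 : DifferentiableAt ℝ (fun q : ℝ × ℝ => q.1 ^ (m+3) * dX w q) p :=
      diff_pow_mul (hwx p hp).differentiableAt (m+3)
    have hdiff3 : DifferentiableAt ℝ (fun q : ℝ × ℝ => q.1 ^ (m+3) * dY w q) p :=
      diff_pow_mul (hwy p hp).differentiableAt (m+3)
    have hx1 := (dXY_pow_mul (hw p hp).differentiableAt (m+1)).1
    have hy1 := (dXY_pow_mul (hw p hp).differentiableAt (m+1)).2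
    have hx2 := (dXY_pow_mul (hwx p hp).differentiableAt (m+2)).1
    have hy2 := (dXY_pow_mul (hwx p hp).differentiableAt (m+2)).2
    have hx3 := (dXY_pow_mul (hwy p hp).differentiableAt (m+2)).1
    have hy3 := (dXY_pow_mul (hwy p hp).differentiableAt (m+2)).2
    rw [show m+1+1 = m+2 from rfl] at hx1 hy1
    rw [show m+2+1 = m+3 from rfl] at hx2 hy2 hx3 hy3
    have hXF : dX F p = ((m+3 : ℝ) * cθ) * dX (fun q : ℝ × ℝ => q.1 ^ (m+2) * w q) p
        + cθ * dX (fun q : ℝ × ℝ => q.1 ^ (m+3) * dX w q) p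
        + sθ * dX (fun q : ℝ × ℝ => q.1 ^ (m+3) * dY w q) p := by
      rw [dX, hF]
      exact dX_lin _ _ _ hdiff1 hdiff2 hdiff3 _
    have hYF : dY F p = ((m+3 : ℝ) * cθ) * dY (fun q : ℝ × ℝ => q.1 ^ (m+2) * w q) p
        + cθ * dY (fun q : ℝ × ℝ => q.1 ^ (m+3) * dX w q) p
        + sθ * dY (fun q : ℝ × ℝ => q.1 ^ (m+3) * dY w q) p := by
      rw [dY, hF]
      exact dX_lin _ _ _ hdiff1 hdiff2 hdiff3 _
    have e1 : dX (fun q : ℝ × ℝ => cθ * dX (fun r : ℝ × ℝ => r.1 ^ (m+3) * w r) q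
        + sθ * dY (fun r : ℝ × ℝ => r.1 ^ (m+3) * w r) q) p = dX F p := by rw [dX, dX, hfd]
    have e2 : dY (fun q : ℝ × ℝ => cθ * dX (fun r : ℝ × ℝ => r.1 ^ (m+3) * w r) q
        + sθ * dY (fun r : ℝ × ℝ => r.1 ^ (m+3) * w r) q) p = dY F p := by rw [dY, dY, hfd]
    have : p.1 ^ (m+1) • V p = (p.1 ^ (m+1) * (A * w p + p.1 * R₁ p),
        p.1 ^ (m+1) * (p.1 * R₂ p)) := rfl
    rw [this, Prod.mk.injEq]
    constructor
    · rw [e1, hXF, hx1, hx2, hx3, hA, hR₁]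
      push_cast
      ring
    · rw [e2, hYF, hy1, hy2, hy3, hR₂]
      push_cast
      ring
  -- continuity of V and the limit value
  have contAt : ∀ (f : ℝ × ℝ → ℝ), AnalyticOnNhd ℝ f U → ContinuousAt f (0, y₀) :=
    fun f hf => (hf _ hy₀U).continuousAt
  have hVc : ContinuousAt V (0, y₀) := by
    apply ContinuousAt.prodMk
    · exact (continuousAt_const.mul (contAt w hw)).add (continuousAt_fst.mul
        (((continuousAt_const.mul (contAt _ hwx)).add
          (continuousAt_const.mul (contAt _ hwy))).add
          (continuousAt_fst.mul ((continuousAt_const.mul (contAt _ hwxx)).add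
            (continuousAt_const.mul (contAt _ hwyx))))))
    · exact continuousAt_fst.mul ((continuousAt_const.mul (contAt _ hwy)).add
        (continuousAt_fst.mul ((continuousAt_const.mul (contAt _ hwxy)).add
          (continuousAt_const.mul (contAt _ hwyy)))))
  have hV0 : V (0, y₀) = (A * w (0, y₀), 0) := by
    simp [hV]
  have hc : A * w (0, y₀) ≠ 0 := by
    apply mul_ne_zero _ hw0
    apply mul_ne_zero (mul_ne_zero _ _) hθ <;> positivity
  -- a generic one-side argument
  have main : ∀ (S : Set (ℝ × ℝ)) (s : ℝ), (s = 1 ∨ s = -1) →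
      (∀ p ∈ S, |p.1 ^ (m+1)|⁻¹ * p.1 ^ (m+1) = s) →
      ∃ ε : ℝ, (ε = 1 ∨ ε = -1) ∧
        Filter.Tendsto (fun p => ‖(dX (fun q : ℝ × ℝ => cθ * dX (fun r : ℝ × ℝ => r.1 ^ (m+3) * w r) q
          + sθ * dY (fun r : ℝ × ℝ => r.1 ^ (m+3) * w r) q) p,
          dY (fun q : ℝ × ℝ => cθ * dX (fun r : ℝ × ℝ => r.1 ^ (m+3) * w r) q
          + sθ * dY (fun r : ℝ × ℝ => r.1 ^ (m+3) * w r) q) p)‖⁻¹ •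
          (dX (fun q : ℝ × ℝ => cθ * dX (fun r : ℝ × ℝ => r.1 ^ (m+3) * w r) q
          + sθ * dY (fun r : ℝ × ℝ => r.1 ^ (m+3) * w r) q) p,
          dY (fun q : ℝ × ℝ => cθ * dX (fun r : ℝ × ℝ => r.1 ^ (m+3) * w r) q
          + sθ * dY (fun r : ℝ × ℝ => r.1 ^ (m+3) * w r) q) p))
          (nhdsWithin ((0 : ℝ), y₀) S) (nhds (ε, 0)) := by
    intro S s hs hsig
    refine side_limit (V := V) hs hc ?_ ?_
    · have hUev : ∀ᶠ p in nhdsWithin ((0 : ℝ), y₀) S, p ∈ U :=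
        mem_nhdsWithin_of_mem_nhds (hU.mem_nhds hy₀U)
      have hSev : ∀ᶠ p in nhdsWithin ((0 : ℝ), y₀) S, p ∈ S := self_mem_nhdsWithin
      filter_upwards [hUev, hSev] with p hpU hpS
      rw [hGV p hpU, normalize_smul, hsig p hpS]
    · have := hVc.continuousWithinAt (s := S)
      rw [ContinuousWithinAt, hV0] at this
      exact this
  constructor
  · apply main _ 1 (Or.inl rfl)
    intro p hp
    have hx : (0:ℝ) < p.1 := hp
    have ht : (0:ℝ) < p.1 ^ (m+1) := pow_pos hx _
    rw [abs_of_pos ht, inv_mul_cancel₀ (ne_of_gt ht)]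
  · apply main _ ((-1 : ℝ) ^ (m+1)) ?_ ?_
    · rcases Nat.even_or_odd (m+1) with he | ho
      · exact Or.inl he.neg_one_pow
      · exact Or.inr ho.neg_one_pow
    · intro p hp
      have hx : p.1 < 0 := hp
      have habs : |p.1 ^ (m+1)| = |p.1| ^ (m+1) := abs_pow _ _
      have hxe : p.1 = -|p.1| := by rw [abs_of_neg hx]; ring
      have hne : |p.1| ≠ 0 := abs_ne_zero.2 (ne_of_lt hx)
      rw [habs]
      nth_rewrite 2 [hxe]
      rw [neg_pow]
      field_simp
end

section
/- Parametrize a real analytic surface Σ in S³ near q₀ = (1,0,0,0) by ψ(x,y) = (1, x, y, h(x,y))/√(1 + x² + y² + h(x,y)²) for a real analytic h with h(0,0)=0 and ∇h(0,0)=(0,0). Then the second fundamental form of ψ is a positive multiple of the Hessian of h: (e f; f g) = (1+x²+y²+h²)^{-1/2}·(1+h_x²+h_y²+(x h_x + y h_y − h)²)^{-1/2}·(h_xx h_xy; h_xy h_yy). Consequently, Σ has κ₁κ₂ ≤ 0 near q₀ if and only if det D²h ≤ 0, and a point ψ(x,y) is umbilic for a saddle Σ if and only if D²h(x,y) = 0.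 -/
noncomputable def Du {E : Type*} [NormedAddCommGroup E] [NormedSpace ℝ E]
    (f : ℝ × ℝ → E) (p : ℝ × ℝ) : E := fderiv ℝ f p (1, 0)
noncomputable def Dv {E : Type*} [NormedAddCommGroup E] [NormedSpace ℝ E]
    (f : ℝ × ℝ → E) (p : ℝ × ℝ) : E := fderiv ℝ f p (0, 1)

def dot {m : ℕ} (u v : Fin m → ℝ) : ℝ := ∑ i, u i * v i

namespace S17

open Real

noncomputable def rr (h : ℝ × ℝ → ℝ) (p : ℝ × ℝ) : ℝ :=
  (Real.sqrt (1 + p.1 ^ 2 + p.2 ^ 2 + h p ^ 2))⁻¹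

noncomputable def ss (h : ℝ × ℝ → ℝ) (p : ℝ × ℝ) : ℝ :=
  (Real.sqrt (1 + dX h p ^ 2 + dY h p ^ 2 +
    (p.1 * dX h p + p.2 * dY h p - h p) ^ 2))⁻¹

def XX (h : ℝ × ℝ → ℝ) (p : ℝ × ℝ) : Fin 4 → ℝ := ![1, p.1, p.2, h p]
noncomputable def Xu (h : ℝ × ℝ → ℝ) (p : ℝ × ℝ) : Fin 4 → ℝ := ![0, 1, 0, dX h p]
noncomputable def Xv (h : ℝ × ℝ → ℝ) (p : ℝ × ℝ) : Fin 4 → ℝ := ![0, 0, 1, dY h p]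
noncomputable def nv (h : ℝ × ℝ → ℝ) (p : ℝ × ℝ) : Fin 4 → ℝ :=
  ![p.1 * dX h p + p.2 * dY h p - h p, -dX h p, -dY h p, 1]
noncomputable def NN (h : ℝ × ℝ → ℝ) (p : ℝ × ℝ) : Fin 4 → ℝ := fun i => ss h p * nv h p i

/-! ### basic derivative helper lemmas -/

lemma fderiv_mul_apply {f g : ℝ × ℝ → ℝ} {p v : ℝ × ℝ}
    (hf : DifferentiableAt ℝ f p) (hg : DifferentiableAt ℝ g p) :
    fderiv ℝ (fun q => f q * g q) p v = fderiv ℝ f p v * g p + f p * fderiv ℝ g p v := by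
  rw [fderiv_fun_mul hf hg]
  simp [ContinuousLinearMap.add_apply, ContinuousLinearMap.smul_apply]
  ring

lemma dX_mul {f g : ℝ × ℝ → ℝ} {p : ℝ × ℝ}
    (hf : DifferentiableAt ℝ f p) (hg : DifferentiableAt ℝ g p) :
    dX (fun q => f q * g q) p = dX f p * g p + f p * dX g p :=
  fderiv_mul_apply hf hg

lemma dY_mul {f g : ℝ × ℝ → ℝ} {p : ℝ × ℝ}
    (hf : DifferentiableAt ℝ f p) (hg : DifferentiableAt ℝ g p) :
    dY (fun q => f q * g q) p = dY f p * g p + f p * dY g p :=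
  fderiv_mul_apply hf hg

lemma dX_add {f g : ℝ × ℝ → ℝ} {p : ℝ × ℝ}
    (hf : DifferentiableAt ℝ f p) (hg : DifferentiableAt ℝ g p) :
    dX (fun q => f q + g q) p = dX f p + dX g p := by
  unfold dX; rw [fderiv_fun_add hf hg]; rfl

lemma dY_add {f g : ℝ × ℝ → ℝ} {p : ℝ × ℝ}
    (hf : DifferentiableAt ℝ f p) (hg : DifferentiableAt ℝ g p) :
    dY (fun q => f q + g q) p = dY f p + dY g p := by
  unfold dY; rw [fderiv_fun_add hf hg]; rfl

lemma Du_pi {φ : ℝ × ℝ → Fin 4 → ℝ} {p : ℝ × ℝ}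
    (hφ : ∀ i, DifferentiableAt ℝ (fun q => φ q i) p) (i : Fin 4) :
    Du φ p i = dX (fun q => φ q i) p := by
  have := fderiv_pi (𝕜 := ℝ) (φ := fun i q => φ q i) (x := p) hφ
  unfold Du dX
  rw [this]
  rfl

lemma Dv_pi {φ : ℝ × ℝ → Fin 4 → ℝ} {p : ℝ × ℝ}
    (hφ : ∀ i, DifferentiableAt ℝ (fun q => φ q i) p) (i : Fin 4) :
    Dv φ p i = dY (fun q => φ q i) p := by
  have := fderiv_pi (𝕜 := ℝ) (φ := fun i q => φ q i) (x := p) hφ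
  unfold Dv dY
  rw [this]
  rfl

lemma Du_congr {φ φ' : ℝ × ℝ → Fin 4 → ℝ} {p : ℝ × ℝ} (hfg : φ =ᶠ[nhds p] φ') :
    Du φ p = Du φ' p := by
  unfold Du; rw [hfg.fderiv_eq]

lemma Dv_congr {φ φ' : ℝ × ℝ → Fin 4 → ℝ} {p : ℝ × ℝ} (hfg : φ =ᶠ[nhds p] φ') :
    Dv φ p = Dv φ' p := by
  unfold Dv; rw [hfg.fderiv_eq]

/-! ### derivatives of the coordinate vectors -/

lemma dX_XX {h : ℝ × ℝ → ℝ} {q : ℝ × ℝ} (i : Fin 4) :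
    dX (fun w => XX h w i) q = Xu h q i := by
  fin_cases i
  · show dX (fun _ => (1 : ℝ)) q = 0
    unfold dX; simp
  · show dX (fun w : ℝ × ℝ => w.1) q = 1
    unfold dX
    rw [show (fun w : ℝ × ℝ => w.1) = Prod.fst from rfl, fderiv_fst]
    rfl
  · show dX (fun w : ℝ × ℝ => w.2) q = 0
    unfold dX
    rw [show (fun w : ℝ × ℝ => w.2) = Prod.snd from rfl, fderiv_snd]
    rfl
  · rfl

lemma dY_XX {h : ℝ × ℝ → ℝ} {q : ℝ × ℝ} (i : Fin 4) :
    dY (fun w => XX h w i) q = Xv h q i := by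
  fin_cases i
  · show dY (fun _ => (1 : ℝ)) q = 0
    unfold dY; simp
  · show dY (fun w : ℝ × ℝ => w.1) q = 0
    unfold dY
    rw [show (fun w : ℝ × ℝ => w.1) = Prod.fst from rfl, fderiv_fst]
    rfl
  · show dY (fun w : ℝ × ℝ => w.2) q = 1
    unfold dY
    rw [show (fun w : ℝ × ℝ => w.2) = Prod.snd from rfl, fderiv_snd]
    rfl
  · rfl

lemma dX_Xu {h : ℝ × ℝ → ℝ} {q : ℝ × ℝ} (i : Fin 4) :
    dX (fun w => Xu h w i) q = (![0, 0, 0, dX (dX h) q] : Fin 4 → ℝ) i := by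
  fin_cases i
  · show dX (fun _ => (0 : ℝ)) q = 0
    unfold dX; simp
  · show dX (fun _ => (1 : ℝ)) q = 0
    unfold dX; simp
  · show dX (fun _ => (0 : ℝ)) q = 0
    unfold dX; simp
  · rfl

lemma dX_Xv {h : ℝ × ℝ → ℝ} {q : ℝ × ℝ} (i : Fin 4) :
    dX (fun w => Xv h w i) q = (![0, 0, 0, dX (dY h) q] : Fin 4 → ℝ) i := by
  fin_cases i
  · show dX (fun _ => (0 : ℝ)) q = 0
    unfold dX; simp
  · show dX (fun _ => (0 : ℝ)) q = 0
    unfold dX; simp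
  · show dX (fun _ => (1 : ℝ)) q = 0
    unfold dX; simp
  · rfl

lemma dY_Xv {h : ℝ × ℝ → ℝ} {q : ℝ × ℝ} (i : Fin 4) :
    dY (fun w => Xv h w i) q = (![0, 0, 0, dY (dY h) q] : Fin 4 → ℝ) i := by
  fin_cases i
  · show dY (fun _ => (0 : ℝ)) q = 0
    unfold dY; simp
  · show dY (fun _ => (0 : ℝ)) q = 0
    unfold dY; simp
  · show dY (fun _ => (1 : ℝ)) q = 0
    unfold dY; simp
  · rfl

lemma diff_XX {h : ℝ × ℝ → ℝ} {q : ℝ × ℝ} (hd : DifferentiableAt ℝ h q) (i : Fin 4) :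
    DifferentiableAt ℝ (fun w => XX h w i) q := by
  fin_cases i
  · exact differentiableAt_const _
  · exact differentiableAt_fst
  · exact differentiableAt_snd
  · exact hd

lemma diff_Xu {h : ℝ × ℝ → ℝ} {q : ℝ × ℝ} (hd : DifferentiableAt ℝ (dX h) q) (i : Fin 4) :
    DifferentiableAt ℝ (fun w => Xu h w i) q := by
  fin_cases i
  · exact differentiableAt_const _
  · exact differentiableAt_const _
  · exact differentiableAt_const _
  · exact hd

lemma diff_Xv {h : ℝ × ℝ → ℝ} {q : ℝ × ℝ} (hd : DifferentiableAt ℝ (dY h) q) (i : Fin 4) :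
    DifferentiableAt ℝ (fun w => Xv h w i) q := by
  fin_cases i
  · exact differentiableAt_const _
  · exact differentiableAt_const _
  · exact differentiableAt_const _
  · exact hd

/-! ### analyticity -/

open scoped ContDiff in
lemma an_dX {Ω : Set (ℝ × ℝ)} {f : ℝ × ℝ → ℝ} (hf : AnalyticOnNhd ℝ f Ω) :
    AnalyticOnNhd ℝ (dX f) Ω := by
  intro p hp
  have h1 : AnalyticAt ℝ (fderiv ℝ f) p := hf.fderiv p hp
  exact ((ContinuousLinearMap.apply ℝ ℝ (((1 : ℝ), (0 : ℝ)))).analyticAt _).comp h1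

open scoped ContDiff in
lemma an_dY {Ω : Set (ℝ × ℝ)} {f : ℝ × ℝ → ℝ} (hf : AnalyticOnNhd ℝ f Ω) :
    AnalyticOnNhd ℝ (dY f) Ω := by
  intro p hp
  have h1 : AnalyticAt ℝ (fderiv ℝ f) p := hf.fderiv p hp
  exact ((ContinuousLinearMap.apply ℝ ℝ (((0 : ℝ), (1 : ℝ)))).analyticAt _).comp h1

open scoped ContDiff in
lemma an_rr {Ω : Set (ℝ × ℝ)} {h : ℝ × ℝ → ℝ} (han : AnalyticOnNhd ℝ h Ω) :
    AnalyticOnNhd ℝ (rr h) Ω := by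
  intro p hp
  have hQ : AnalyticAt ℝ (fun q : ℝ × ℝ => 1 + q.1 ^ 2 + q.2 ^ 2 + h q ^ 2) p := by
    have h1 : AnalyticAt ℝ (fun q : ℝ × ℝ => (1 : ℝ)) p := analyticAt_const
    have h2 : AnalyticAt ℝ (fun q : ℝ × ℝ => q.1 ^ 2) p := analyticAt_fst.pow 2
    have h3 : AnalyticAt ℝ (fun q : ℝ × ℝ => q.2 ^ 2) p := analyticAt_snd.pow 2
    have h4 : AnalyticAt ℝ (fun q : ℝ × ℝ => h q ^ 2) p := (han p hp).pow 2
    exact ((h1.add h2).add h3).add h4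
  have hQpos : (0 : ℝ) < 1 + p.1 ^ 2 + p.2 ^ 2 + h p ^ 2 := by positivity
  have hs : AnalyticAt ℝ Real.sqrt (1 + p.1 ^ 2 + p.2 ^ 2 + h p ^ 2) :=
    (Real.contDiffAt_sqrt (n := ω) hQpos.ne').analyticAt
  have hcomp : AnalyticAt ℝ (fun q : ℝ × ℝ =>
      Real.sqrt (1 + q.1 ^ 2 + q.2 ^ 2 + h q ^ 2)) p :=
    AnalyticAt.comp (f := fun q : ℝ × ℝ => 1 + q.1 ^ 2 + q.2 ^ 2 + h q ^ 2) hs hQ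
  exact hcomp.inv (ne_of_gt (Real.sqrt_pos.2 hQpos))

end S17

open S17 in
/-- For the parametrization `ψ(x,y) = (1, x, y, h(x,y)) / √(1 + x² + y² + h²)` of a real
analytic surface in `S³` near `q₀ = (1,0,0,0)`, there is a unit normal `N` (tangent to `S³`)
for which the second fundamental form is the stated positive multiple
`(1+x²+y²+h²)^{-1/2} (1+h_x²+h_y²+(x h_x + y h_y - h)²)^{-1/2}` of the Hessian of `h`;
consequently `κ₁κ₂ ≤ 0` iff `det D²h ≤ 0`, and for saddle `Σ` a point is umbilic
(`II = 0`) iff `D²h = 0` there. -/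
theorem stmt17 (Ω : Set (ℝ × ℝ)) (hΩ : IsOpen Ω) (h0Ω : ((0 : ℝ), (0 : ℝ)) ∈ Ω)
    (h : ℝ × ℝ → ℝ) (han : AnalyticOnNhd ℝ h Ω)
    (h0 : h (0, 0) = 0) (hgrad : fderiv ℝ h ((0 : ℝ), (0 : ℝ)) = 0)
    (ψ : ℝ × ℝ → Fin 4 → ℝ)
    (hψ : ψ = fun p i =>
      (![1, p.1, p.2, h p] : Fin 4 → ℝ) i / Real.sqrt (1 + p.1 ^ 2 + p.2 ^ 2 + h p ^ 2))
    (c : ℝ × ℝ → ℝ)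
    (hc : c = fun p => (Real.sqrt (1 + p.1 ^ 2 + p.2 ^ 2 + h p ^ 2))⁻¹ *
      (Real.sqrt (1 + dX h p ^ 2 + dY h p ^ 2 +
        (p.1 * dX h p + p.2 * dY h p - h p) ^ 2))⁻¹) :
    ∃ N : ℝ × ℝ → Fin 4 → ℝ,
      (∀ p ∈ Ω, dot (N p) (N p) = 1 ∧ dot (N p) (ψ p) = 0 ∧
        dot (N p) (Du ψ p) = 0 ∧ dot (N p) (Dv ψ p) = 0) ∧
      (∀ p ∈ Ω,
        dot (Du (Du ψ) p) (N p) = c p * dX (dX h) p ∧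
        dot (Du (Dv ψ) p) (N p) = c p * dX (dY h) p ∧
        dot (Dv (Dv ψ) p) (N p) = c p * dY (dY h) p) ∧
      (∀ p ∈ Ω,
        (dot (Du (Du ψ) p) (N p) * dot (Dv (Dv ψ) p) (N p)
            - (dot (Du (Dv ψ) p) (N p)) ^ 2 ≤ 0 ↔
          dX (dX h) p * dY (dY h) p - (dX (dY h) p) ^ 2 ≤ 0)) ∧
      ((∀ p ∈ Ω, dX (dX h) p * dY (dY h) p - (dX (dY h) p) ^ 2 ≤ 0) →
        ∀ p ∈ Ω,
          ((dot (Du (Du ψ) p) (N p) = 0 ∧ dot (Du (Dv ψ) p) (N p) = 0 ∧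
              dot (Dv (Dv ψ) p) (N p) = 0) ↔
            (dX (dX h) p = 0 ∧ dX (dY h) p = 0 ∧ dY (dY h) p = 0))) := by
    -- rewrite ψ and c in terms of the auxiliary functions
  have hψ' : ψ = fun q i => XX h q i * rr h q := by
    rw [hψ]; funext q i; simp [XX, rr, div_eq_mul_inv]
  have hc' : ∀ p : ℝ × ℝ, c p = rr h p * ss h p := by
    intro p; rw [hc]; rfl
  -- analyticity package
  have hAdx : AnalyticOnNhd ℝ (dX h) Ω := an_dX han
  have hAdy : AnalyticOnNhd ℝ (dY h) Ω := an_dY han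
  have hArr : AnalyticOnNhd ℝ (rr h) Ω := an_rr han
  have hArrx : AnalyticOnNhd ℝ (dX (rr h)) Ω := an_dX hArr
  have hArry : AnalyticOnNhd ℝ (dY (rr h)) Ω := an_dY hArr
  -- differentiability of the coordinates of ψ
  have hdco : ∀ q ∈ Ω, ∀ i, DifferentiableAt ℝ (fun w => XX h w i * rr h w) q := by
    intro q hq i
    exact (diff_XX (han q hq).differentiableAt i).mul (hArr q hq).differentiableAt
  -- first derivatives of ψ
  have hDuψ : ∀ q ∈ Ω, Du ψ q = fun i => dX (rr h) q * XX h q i + rr h q * Xu h q i := by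
    intro q hq
    rw [hψ']
    funext i
    rw [Du_pi (hdco q hq) i,
      dX_mul (diff_XX (han q hq).differentiableAt i) (hArr q hq).differentiableAt, dX_XX i]
    ring
  have hDvψ : ∀ q ∈ Ω, Dv ψ q = fun i => dY (rr h) q * XX h q i + rr h q * Xv h q i := by
    intro q hq
    rw [hψ']
    funext i
    rw [Dv_pi (hdco q hq) i,
      dY_mul (diff_XX (han q hq).differentiableAt i) (hArr q hq).differentiableAt, dY_XX i]
    ring
  -- differentiability of first-derivative coordinates
  have hdFu : ∀ q ∈ Ω, ∀ i,
      DifferentiableAt ℝ (fun w => dX (rr h) w * XX h w i + rr h w * Xu h w i) q := by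
    intro q hq i
    exact ((hArrx q hq).differentiableAt.mul (diff_XX (han q hq).differentiableAt i)).add
      ((hArr q hq).differentiableAt.mul (diff_Xu (hAdx q hq).differentiableAt i))
  have hdFv : ∀ q ∈ Ω, ∀ i,
      DifferentiableAt ℝ (fun w => dY (rr h) w * XX h w i + rr h w * Xv h w i) q := by
    intro q hq i
    exact ((hArry q hq).differentiableAt.mul (diff_XX (han q hq).differentiableAt i)).add
      ((hArr q hq).differentiableAt.mul (diff_Xv (hAdy q hq).differentiableAt i))
  -- second derivatives, in the canonical form
  have hDuDu : ∀ p ∈ Ω, ∃ a b b' : ℝ, Du (Du ψ) p = fun i => a * XX h p i + b * Xu h p i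
      + b' * Xv h p i + rr h p * (![0, 0, 0, dX (dX h) p] : Fin 4 → ℝ) i := by
    intro p hp
    refine ⟨dX (dX (rr h)) p, dX (rr h) p + dX (rr h) p, 0, ?_⟩
    have hev : Du ψ =ᶠ[nhds p] (fun q i => dX (rr h) q * XX h q i + rr h q * Xu h q i) :=
      Filter.eventuallyEq_of_mem (hΩ.mem_nhds hp) (fun q hq => hDuψ q hq)
    rw [Du_congr hev]
    funext i
    rw [Du_pi (hdFu p hp) i,
      dX_add ((hArrx p hp).differentiableAt.fun_mul (diff_XX (han p hp).differentiableAt i))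
        ((hArr p hp).differentiableAt.fun_mul (diff_Xu (hAdx p hp).differentiableAt i)),
      dX_mul (hArrx p hp).differentiableAt (diff_XX (han p hp).differentiableAt i),
      dX_mul (hArr p hp).differentiableAt (diff_Xu (hAdx p hp).differentiableAt i),
      dX_XX i, dX_Xu i]
    ring
  have hDuDv : ∀ p ∈ Ω, ∃ a b b' : ℝ, Du (Dv ψ) p = fun i => a * XX h p i + b * Xu h p i
      + b' * Xv h p i + rr h p * (![0, 0, 0, dX (dY h) p] : Fin 4 → ℝ) i := by
    intro p hp
    refine ⟨dX (dY (rr h)) p, dY (rr h) p, dX (rr h) p, ?_⟩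
    have hev : Dv ψ =ᶠ[nhds p] (fun q i => dY (rr h) q * XX h q i + rr h q * Xv h q i) :=
      Filter.eventuallyEq_of_mem (hΩ.mem_nhds hp) (fun q hq => hDvψ q hq)
    rw [Du_congr hev]
    funext i
    rw [Du_pi (hdFv p hp) i,
      dX_add ((hArry p hp).differentiableAt.fun_mul (diff_XX (han p hp).differentiableAt i))
        ((hArr p hp).differentiableAt.fun_mul (diff_Xv (hAdy p hp).differentiableAt i)),
      dX_mul (hArry p hp).differentiableAt (diff_XX (han p hp).differentiableAt i),
      dX_mul (hArr p hp).differentiableAt (diff_Xv (hAdy p hp).differentiableAt i),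
      dX_XX i, dX_Xv i]
    ring
  have hDvDv : ∀ p ∈ Ω, ∃ a b b' : ℝ, Dv (Dv ψ) p = fun i => a * XX h p i + b * Xu h p i
      + b' * Xv h p i + rr h p * (![0, 0, 0, dY (dY h) p] : Fin 4 → ℝ) i := by
    intro p hp
    refine ⟨dY (dY (rr h)) p, 0, dY (rr h) p + dY (rr h) p, ?_⟩
    have hev : Dv ψ =ᶠ[nhds p] (fun q i => dY (rr h) q * XX h q i + rr h q * Xv h q i) :=
      Filter.eventuallyEq_of_mem (hΩ.mem_nhds hp) (fun q hq => hDvψ q hq)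
    rw [Dv_congr hev]
    funext i
    rw [Dv_pi (hdFv p hp) i,
      dY_add ((hArry p hp).differentiableAt.fun_mul (diff_XX (han p hp).differentiableAt i))
        ((hArr p hp).differentiableAt.fun_mul (diff_Xv (hAdy p hp).differentiableAt i)),
      dY_mul (hArry p hp).differentiableAt (diff_XX (han p hp).differentiableAt i),
      dY_mul (hArr p hp).differentiableAt (diff_Xv (hAdy p hp).differentiableAt i),
      dY_XX i, dY_Xv i]
    ring
  -- the key dot-product computation
  have hdot : ∀ p : ℝ × ℝ, ∀ a b b' k : ℝ,
      dot (fun i => a * XX h p i + b * Xu h p i + b' * Xv h p i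
        + rr h p * (![0, 0, 0, k] : Fin 4 → ℝ) i) (NN h p) = c p * k := by
    intro p a b b' k
    rw [hc']
    unfold dot NN nv XX Xu Xv ss
    rw [Fin.sum_univ_four]
    simp only [Matrix.cons_val_zero, Matrix.cons_val_one, Matrix.head_cons,
      Matrix.cons_val_two, Matrix.tail_cons, Matrix.cons_val_three]
    ring
  -- positivity of c
  have hcpos : ∀ p : ℝ × ℝ, 0 < c p := by
    intro p
    rw [hc']
    have h1 : (0 : ℝ) < 1 + p.1 ^ 2 + p.2 ^ 2 + h p ^ 2 := by positivity
    have h2 : (0 : ℝ) < 1 + dX h p ^ 2 + dY h p ^ 2 +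
        (p.1 * dX h p + p.2 * dY h p - h p) ^ 2 := by positivity
    unfold rr ss
    have := Real.sqrt_pos.2 h1
    have := Real.sqrt_pos.2 h2
    positivity
  -- the three second-fundamental-form coefficients
  have hE : ∀ p ∈ Ω, dot (Du (Du ψ) p) (NN h p) = c p * dX (dX h) p := by
    intro p hp
    obtain ⟨a, b, b', hab⟩ := hDuDu p hp
    rw [hab]
    exact hdot p a b b' _
  have hF : ∀ p ∈ Ω, dot (Du (Dv ψ) p) (NN h p) = c p * dX (dY h) p := by
    intro p hp
    obtain ⟨a, b, b', hab⟩ := hDuDv p hp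
    rw [hab]
    exact hdot p a b b' _
  have hG : ∀ p ∈ Ω, dot (Dv (Dv ψ) p) (NN h p) = c p * dY (dY h) p := by
    intro p hp
    obtain ⟨a, b, b', hab⟩ := hDvDv p hp
    rw [hab]
    exact hdot p a b b' _
  refine ⟨NN h, ?_, ?_, ?_, ?_⟩
  · -- unit normal, orthogonality
    intro p hp
    have hWpos : (0 : ℝ) < 1 + dX h p ^ 2 + dY h p ^ 2 +
        (p.1 * dX h p + p.2 * dY h p - h p) ^ 2 := by positivity
    have hsq : Real.sqrt (1 + dX h p ^ 2 + dY h p ^ 2 +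
        (p.1 * dX h p + p.2 * dY h p - h p) ^ 2) ^ 2 = 1 + dX h p ^ 2 + dY h p ^ 2 +
        (p.1 * dX h p + p.2 * dY h p - h p) ^ 2 := Real.sq_sqrt hWpos.le
    have hne : Real.sqrt (1 + dX h p ^ 2 + dY h p ^ 2 +
        (p.1 * dX h p + p.2 * dY h p - h p) ^ 2) ≠ 0 :=
      ne_of_gt (Real.sqrt_pos.2 hWpos)
    refine ⟨?_, ?_, ?_, ?_⟩
    · unfold dot NN nv ss
      rw [Fin.sum_univ_four]
      simp only [Matrix.cons_val_zero, Matrix.cons_val_one, Matrix.head_cons,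
        Matrix.cons_val_two, Matrix.tail_cons, Matrix.cons_val_three]
      field_simp
      rw [show dX h p * p.1 + dY h p * p.2 - h p = p.1 * dX h p + p.2 * dY h p - h p by ring]
      nlinarith [hsq]
    · rw [hψ']
      unfold dot NN nv XX rr
      rw [Fin.sum_univ_four]
      simp only [Matrix.cons_val_zero, Matrix.cons_val_one, Matrix.head_cons,
        Matrix.cons_val_two, Matrix.tail_cons, Matrix.cons_val_three]
      ring
    · rw [hDuψ p hp]
      unfold dot NN nv XX Xu
      rw [Fin.sum_univ_four]
      simp only [Matrix.cons_val_zero, Matrix.cons_val_one, Matrix.head_cons,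
        Matrix.cons_val_two, Matrix.tail_cons, Matrix.cons_val_three]
      ring
    · rw [hDvψ p hp]
      unfold dot NN nv XX Xv
      rw [Fin.sum_univ_four]
      simp only [Matrix.cons_val_zero, Matrix.cons_val_one, Matrix.head_cons,
        Matrix.cons_val_two, Matrix.tail_cons, Matrix.cons_val_three]
      ring
  · exact fun p hp => ⟨hE p hp, hF p hp, hG p hp⟩
  · intro p hp
    rw [hE p hp, hF p hp, hG p hp]
    have hcp := hcpos p
    constructor
    · intro hle
      nlinarith [mul_pos hcp hcp]
    · intro hle
      nlinarith [mul_pos hcp hcp]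
  · intro _ p hp
    rw [hE p hp, hF p hp, hG p hp]
    have hcp := (hcpos p).ne'
    constructor
    · rintro ⟨h1, h2, h3⟩
      exact ⟨by rcases mul_eq_zero.1 h1 with h | h; exact absurd h hcp; exact h,
        by rcases mul_eq_zero.1 h2 with h | h; exact absurd h hcp; exact h,
        by rcases mul_eq_zero.1 h3 with h | h; exact absurd h hcp; exact h⟩
    · rintro ⟨h1, h2, h3⟩
      rw [h1, h2, h3]
      simp
end

section
/- Let Σ ⊆ S³ be a surface of the form ψ(x,y) = (1, x, y, h(x,y))/√(1+x²+y²+h²) with h real analytic, det D²h ≤ 0, and suppose D²h vanishes identically along a segment Γ of the line {x = 0} through the origin. Then ψ(Γ) is a geodesic arc of S³ contained in Σ. -/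
/-- If `Σ ⊆ S³` is parametrized by `ψ(x,y) = (1,x,y,h(x,y))/√(1+x²+y²+h²)` with `h` real
analytic, `det D²h ≤ 0`, and the Hessian `D²h` vanishes identically along a segment
`Γ = {0} × [-δ, δ]` of the line `{x = 0}` through the origin, then `ψ(Γ)` is a geodesic arc
of `S³`, i.e. it is contained in the great circle `S³ ∩ P` for some 2-dimensional linear
subspace `P ⊆ ℝ⁴` (and it lies in `Σ = ψ(Ω)`). -/
theorem stmt18 (Ω : Set (ℝ × ℝ)) (hΩ : IsOpen Ω)
    (δ : ℝ) (hδ : 0 < δ)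
    (Γ : Set (ℝ × ℝ)) (hΓdef : Γ = {(0 : ℝ)} ×ˢ Set.Icc (-δ) δ) (hΓΩ : Γ ⊆ Ω)
    (h : ℝ × ℝ → ℝ) (han : AnalyticOnNhd ℝ h Ω)
    (hsaddle : ∀ p ∈ Ω, dX (dX h) p * dY (dY h) p - (dX (dY h) p) ^ 2 ≤ 0)
    (hhess : ∀ p ∈ Γ, dX (dX h) p = 0 ∧ dX (dY h) p = 0 ∧
      dY (dX h) p = 0 ∧ dY (dY h) p = 0)
    (ψ : ℝ × ℝ → Fin 4 → ℝ)
    (hψ : ψ = fun p i =>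
      (![1, p.1, p.2, h p] : Fin 4 → ℝ) i / Real.sqrt (1 + p.1 ^ 2 + p.2 ^ 2 + h p ^ 2)) :
    ∃ P : Submodule ℝ (Fin 4 → ℝ), Module.finrank ℝ P = 2 ∧
      ∀ p ∈ Γ, ψ p ∈ P := by
  have hmem : ∀ y ∈ Set.Icc (-δ) δ, ((0:ℝ), y) ∈ Ω := by
    intro y hy; exact hΓΩ (by rw [hΓdef]; exact ⟨rfl, hy⟩)
  have hdiff : ∀ p ∈ Ω, DifferentiableAt ℝ h p := fun p hp => (han p hp).differentiableAt
  have han' : AnalyticOnNhd ℝ (fderiv ℝ h) Ω := han.fderiv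
  have hdiff2 : ∀ p ∈ Ω, DifferentiableAt ℝ (dY h) p := by
    intro p hp
    exact ((han' p hp).differentiableAt).clm_apply (differentiableAt_const _)
  have hcurve : ∀ y : ℝ, HasDerivAt (fun t : ℝ => ((0:ℝ), t)) ((0:ℝ), (1:ℝ)) y :=
    fun y => HasDerivAt.prodMk (hasDerivAt_const y (0:ℝ)) (hasDerivAt_id y)
  set g : ℝ → ℝ := fun y => h (0, y) with hg
  set k : ℝ → ℝ := fun y => dY h (0, y) with hk
  have hg' : ∀ y ∈ Set.Icc (-δ) δ, HasDerivAt g (k y) y := by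
    intro y hy
    exact ((hdiff _ (hmem y hy)).hasFDerivAt).comp_hasDerivAt y (hcurve y)
  have hk' : ∀ y ∈ Set.Icc (-δ) δ, HasDerivAt k 0 y := by
    intro y hy
    have H := ((hdiff2 _ (hmem y hy)).hasFDerivAt).comp_hasDerivAt y (hcurve y)
    have h0 : fderiv ℝ (dY h) ((0:ℝ), y) ((0:ℝ),(1:ℝ)) = 0 :=
      (hhess _ (by rw [hΓdef]; exact ⟨rfl, hy⟩)).2.2.2
    rwa [h0] at H
  set b : ℝ := k (-δ) with hb
  have hkconst : ∀ y ∈ Set.Icc (-δ) δ, k y = b := by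
    intro y hy
    exact constant_of_has_deriv_right_zero
      (fun t ht => (hk' t ht).continuousAt.continuousWithinAt)
      (fun t ht => (hk' t (Set.mem_Icc_of_Ico ht)).hasDerivWithinAt) y hy
  set a : ℝ := g (-δ) + b * δ with ha
  have hgaff : ∀ y ∈ Set.Icc (-δ) δ, g y = a + b * y := by
    have hGd : ∀ y ∈ Set.Icc (-δ) δ, HasDerivAt (fun t => g t - b * t) 0 y := by
      intro y hy
      have := (hg' y hy).sub ((hasDerivAt_id y).const_mul b)
      rw [hkconst y hy] at this
      exact this.congr_deriv (by ring)
    intro y hy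
    have h1 := constant_of_has_deriv_right_zero
      (fun t ht => (hGd t ht).continuousAt.continuousWithinAt)
      (fun t ht => (hGd t (Set.mem_Icc_of_Ico ht)).hasDerivWithinAt) y hy
    rw [ha]; linarith
  obtain ⟨A, B, hAB⟩ : ∃ A B : ℝ, ∀ y ∈ Set.Icc (-δ) δ, h (0, y) = A + B * y :=
    ⟨a, b, fun y hy => hgaff y hy⟩
  clear hgaff hkconst ha hb hk' hg' hk hg
  -- construct the plane
  have hLI : LinearIndependent ℝ ![(![1, 0, 0, A] : Fin 4 → ℝ), ![0, 0, 1, B]] := by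
    rw [LinearIndependent.pair_iff]
    intro s t hst
    have h0 := congrFun hst 0
    have h2 := congrFun hst 2
    simp at h0 h2
    exact ⟨h0, h2⟩
  refine ⟨Submodule.span ℝ (Set.range ![(![1, 0, 0, A] : Fin 4 → ℝ), ![0, 0, 1, B]]), ?_, ?_⟩
  · rw [finrank_span_eq_card hLI]
    simp
  · intro p hp
    rw [hΓdef] at hp
    obtain ⟨hp1, hp2⟩ := hp
    obtain ⟨x, y⟩ := p
    simp only [Set.mem_singleton_iff] at hp1
    subst hp1
    have hha : h (0, y) = A + B * y := hAB y hp2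
    have hψp : ψ (0, y) = (Real.sqrt (1 + (0:ℝ) ^ 2 + y ^ 2 + h (0,y) ^ 2))⁻¹ •
        ((![1, 0, 0, A] : Fin 4 → ℝ) + y • ![0, 0, 1, B]) := by
      rw [hψ]
      funext i
      simp only [div_eq_inv_mul, Pi.smul_apply, Pi.add_apply, smul_eq_mul]
      fin_cases i <;> (congr 1 <;> simp [hha]) <;> ring
    rw [hψp]
    refine Submodule.smul_mem _ _ (Submodule.add_mem _ ?_ (Submodule.smul_mem _ _ ?_))
    · exact Submodule.subset_span ⟨0, rfl⟩
    · exact Submodule.subset_span ⟨1, rfl⟩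
end
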